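/- arXiv:1207.5749 — 8 statements merged into one kernel-verified Lean document; each statement's English description precedes it below -/
import Mathlib

section
/- Let a > -1, 1 < p < ∞, and E ⊆ [0,∞) be a measurable set. Then (∫_E x^a dx)^p ≤ 2^p (a+1)^{1-p} ∫_E x^{(a+1)p-1} dx. -/
open MeasureTheory Set Filter Topology

private lemma lint_Ioc (a t : ℝ) (ha : -1 < a) (ht : 0 ≤ t) :
    ∫⁻ x in Ioc 0 t, ENNReal.ofReal (x ^ a) = ENNReal.ofReal (t ^ (a+1) / (a+1)) := by
  rw [← ofReal_integral_eq_lintegral_ofReal]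
  · rw [← intervalIntegral.integral_of_le ht, integral_rpow (Or.inl ha),
      Real.zero_rpow (by linarith), sub_zero]
  · exact (intervalIntegral.intervalIntegrable_rpow' ha).1
  · filter_upwards [ae_restrict_mem measurableSet_Ioc] with x hx
    exact Real.rpow_nonneg hx.1.le a

private lemma lint_Iic (a t : ℝ) (ha : -1 < a) (ht : 0 ≤ t) (E : Set ℝ)
    (hE' : E ⊆ Set.Ici 0) :
    ∫⁻ x in Iic t ∩ E, ENNReal.ofReal (x ^ a) ≤ ENNReal.ofReal (t ^ (a+1) / (a+1)) := by
  rw [← lint_Ioc a t ha ht]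
  calc ∫⁻ x in Iic t ∩ E, ENNReal.ofReal (x ^ a)
      ≤ ∫⁻ x in Icc 0 t, ENNReal.ofReal (x ^ a) :=
        lintegral_mono_set (fun x hx => ⟨hE' hx.2, hx.1⟩)
    _ = ∫⁻ x in Ioc 0 t, ENNReal.ofReal (x ^ a) := by
        rw [Measure.restrict_congr_set Ioc_ae_eq_Icc]

theorem stmt0 (a p : ℝ) (ha : -1 < a) (hp1 : 1 < p) (E : Set ℝ)
    (hE : MeasurableSet E) (hE' : E ⊆ Set.Ici 0) :
    (∫⁻ x in E, ENNReal.ofReal (x ^ a)) ^ p ≤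
      ENNReal.ofReal (2 ^ p * (a + 1) ^ (1 - p)) *
        ∫⁻ x in E, ENNReal.ofReal (x ^ ((a + 1) * p - 1)) := by
  have ha1 : (0:ℝ) < a + 1 := by linarith
  have hp0 : (0:ℝ) < p := by linarith
  have hCpos : (0:ℝ) < 2 ^ p * (a + 1) ^ (1 - p) := by positivity
  set ν : Measure ℝ := (volume.withDensity fun x => ENNReal.ofReal (x ^ a)).restrict E with hνdef
  have hν : ∀ s : Set ℝ, MeasurableSet s →
      ν s = ∫⁻ x in s ∩ E, ENNReal.ofReal (x ^ a) := by
    intro s hs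
    rw [hνdef, Measure.restrict_apply hs, withDensity_apply _ (hs.inter hE)]
  set F : ENNReal := ∫⁻ x in E, ENNReal.ofReal (x ^ a) with hFdef
  set J : ENNReal := ∫⁻ x in E, ENNReal.ofReal (x ^ ((a + 1) * p - 1)) with hJdef
  have hFuniv : ν univ = F := by rw [hν univ MeasurableSet.univ, univ_inter]
  have hmeasJ : Measurable fun x : ℝ => ENNReal.ofReal (x ^ ((a + 1) * p - 1)) := by
    fun_prop
  -- key lower bound for J
  have hJ : ∀ t : ℝ, 0 < t →
      ENNReal.ofReal (t ^ ((a+1)*(p-1))) * ν (Ici t) ≤ J := by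
    intro t ht
    rw [hν (Ici t) measurableSet_Ici, ← lintegral_const_mul' _ _ ENNReal.ofReal_ne_top]
    calc ∫⁻ x in Ici t ∩ E, ENNReal.ofReal (t ^ ((a+1)*(p-1))) * ENNReal.ofReal (x ^ a)
        ≤ ∫⁻ x in Ici t ∩ E, ENNReal.ofReal (x ^ ((a + 1) * p - 1)) := by
          refine setLIntegral_mono hmeasJ ?_
          intro x hx
          have hxt : t ≤ x := hx.1
          have hx0 : 0 < x := lt_of_lt_of_le ht hxt
          rw [← ENNReal.ofReal_mul (Real.rpow_nonneg ht.le _)]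
          apply ENNReal.ofReal_le_ofReal
          have h1 : t ^ ((a+1)*(p-1)) * x ^ a ≤ x ^ ((a+1)*(p-1)) * x ^ a :=
            mul_le_mul_of_nonneg_right
              (Real.rpow_le_rpow ht.le hxt (by nlinarith)) (Real.rpow_nonneg hx0.le _)
          refine h1.trans_eq ?_
          rw [← Real.rpow_add hx0]
          ring_nf
      _ ≤ J := lintegral_mono_set inter_subset_right
  rcases eq_or_ne F 0 with hF0 | hF0
  · rw [hF0, ENNReal.zero_rpow_of_pos hp0]
    exact zero_le
  rcases eq_or_ne F ⊤ with hFtop | hFtop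
  · -- infinite case: J = ⊤
    have h1 : ν (Iic 1) ≠ ⊤ := by
      rw [hν (Iic 1) measurableSet_Iic]
      exact ne_top_of_le_ne_top ENNReal.ofReal_ne_top (lint_Iic a 1 ha zero_le_one E hE')
    have h2 : ν (Ici 1) = ⊤ := by
      by_contra h
      have : ν univ ≤ ν (Iic 1) + ν (Ici 1) := by
        rw [← Iic_union_Ici (a := (1:ℝ))]
        exact measure_union_le _ _
      rw [hFuniv, hFtop] at this
      exact (ENNReal.add_ne_top.2 ⟨h1, h⟩) (top_le_iff.1 this)
    have hJtop : J = ⊤ := by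
      have := hJ 1 one_pos
      rw [h2, Real.one_rpow, ENNReal.mul_top (by simp)] at this
      exact top_le_iff.1 this
    rw [hJtop, ENNReal.mul_top (ENNReal.ofReal_pos.2 hCpos).ne']
    exact le_top
  -- main case : 0 < F < ⊤
  set Fr : ℝ := F.toReal with hFrdef
  have hFrpos : 0 < Fr := ENNReal.toReal_pos hF0 hFtop
  have hhalf_ne_top : F / 2 ≠ ⊤ := by
    simp [ENNReal.div_eq_top, hFtop]
  set S : Set ℝ := {t : ℝ | F / 2 ≤ ν (Iic t)} with hSdef
  have hmono : Monotone fun t : ℝ => ν (Iic t) :=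
    fun s t hst => measure_mono (Iic_subset_Iic.2 hst)
  have hS_ne : S.Nonempty := by
    have hlt : F / 2 < F := ENNReal.half_lt_self hF0 hFtop
    have := (tendsto_measure_Iic_atTop ν).eventually_const_le (by rw [hFuniv]; exact hlt)
    exact this.exists
  have hSpos : ∀ t ∈ S, 0 ≤ t := by
    intro t ht
    by_contra hneg
    push_neg at hneg
    have hempty : Iic t ∩ E = ∅ := by
      ext x
      simp only [mem_inter_iff, mem_Iic, mem_empty_iff_false, iff_false, not_and]
      intro hx hxE
      exact absurd (hE' hxE) (by simp; linarith)
    have : ν (Iic t) = 0 := by rw [hν (Iic t) measurableSet_Iic, hempty]; simp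
    rw [hSdef] at ht
    simp only [mem_setOf_eq, this, nonpos_iff_eq_zero] at ht
    exact hF0 (by simpa [ENNReal.div_eq_zero_iff] using ht)
  have hSbdd : BddBelow S := ⟨0, hSpos⟩
  set t0 : ℝ := sInf S with ht0def
  have ht0nonneg : 0 ≤ t0 := le_csInf hS_ne hSpos
  have hA : ∀ t : ℝ, t0 < t → F / 2 ≤ ν (Iic t) := by
    intro t ht
    obtain ⟨s, hsS, hst⟩ := exists_lt_of_csInf_lt hS_ne ht
    exact le_trans hsS (hmono hst.le)
  have hB : ∀ t : ℝ, t < t0 → ν (Iic t) ≤ F / 2 := by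
    intro t ht
    by_contra h
    push_neg at h
    exact absurd (csInf_le hSbdd (show t ∈ S from h.le)) (not_le.2 ht)
  -- key real bound : Fr / 2 ≤ t0 ^ (a+1) / (a+1)
  have hkey : Fr / 2 ≤ t0 ^ (a+1) / (a+1) := by
    have hev : ∀ t : ℝ, t0 < t → Fr / 2 ≤ t ^ (a+1) / (a+1) := by
      intro t ht
      have h1 : F / 2 ≤ ENNReal.ofReal (t ^ (a+1) / (a+1)) := by
        refine (hA t ht).trans ?_
        rw [hν (Iic t) measurableSet_Iic]
        exact lint_Iic a t ha (ht0nonneg.trans ht.le) E hE'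
      have h2 := ENNReal.toReal_le_toReal hhalf_ne_top ENNReal.ofReal_ne_top |>.2 h1
      rwa [ENNReal.toReal_div, ENNReal.toReal_ofReal
        (div_nonneg (Real.rpow_nonneg (by linarith) _) ha1.le),
        ENNReal.toReal_ofNat] at h2
    have hcont : Tendsto (fun t : ℝ => t ^ (a+1) / (a+1)) (nhdsWithin t0 (Ioi t0))
        (nhds (t0 ^ (a+1) / (a+1))) := by
      apply Tendsto.div_const
      exact ((Real.continuousAt_rpow_const t0 (a+1) (Or.inr ha1.le)).tendsto).mono_left
        nhdsWithin_le_nhds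
    exact ge_of_tendsto hcont (eventually_nhdsWithin_of_forall fun t ht => hev t ht)
  have ht0pos : 0 < t0 := by
    rcases ht0nonneg.lt_or_eq with h | h
    · exact h
    · exfalso
      rw [← h, Real.zero_rpow (by linarith), zero_div] at hkey
      linarith
  -- ν (Iio t0) ≤ F/2
  have hIio : ν (Iio t0) ≤ F / 2 := by
    have hunion : Iio t0 = ⋃ n : ℕ, Iic (t0 - 1/(n+1)) := by
      ext x
      simp only [mem_Iio, mem_iUnion, mem_Iic]
      constructor
      · intro hx
        obtain ⟨n, hn⟩ := exists_nat_one_div_lt (show (0:ℝ) < t0 - x by linarith)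
        exact ⟨n, by linarith⟩
      · rintro ⟨n, hn⟩
        have : (0:ℝ) < 1/(n+1) := by positivity
        linarith
    rw [hunion, Directed.measure_iUnion ?_]
    · refine iSup_le fun n => hB _ ?_
      have : (0:ℝ) < 1/(n+1) := by positivity
      linarith
    · refine Monotone.directed_le fun m n hmn => Iic_subset_Iic.2 ?_
      have hc : ((m:ℝ)+1) ≤ ((n:ℝ)+1) := by exact_mod_cast by omega
      have := one_div_le_one_div_of_le (by positivity : (0:ℝ) < (m:ℝ)+1) hc
      linarith
  -- F/2 ≤ ν (Ici t0)
  have hIci : F / 2 ≤ ν (Ici t0) := by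
    have h1 : ν univ ≤ ν (Iio t0) + ν (Ici t0) := by
      rw [← Iio_union_Ici (a := t0)]
      exact measure_union_le _ _
    rw [hFuniv] at h1
    have h2 : F / 2 + F / 2 ≤ F / 2 + ν (Ici t0) := by
      calc F / 2 + F / 2 = F := ENNReal.add_halves F
        _ ≤ ν (Iio t0) + ν (Ici t0) := h1
        _ ≤ F / 2 + ν (Ici t0) := add_le_add hIio le_rfl
    exact (ENNReal.add_le_add_iff_left hhalf_ne_top).1 h2
  -- combine
  have hJlow : ENNReal.ofReal (t0 ^ ((a+1)*(p-1))) * (F / 2) ≤ J :=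
    le_trans (mul_le_mul_right hIci _) (hJ t0 ht0pos)
  have hF2 : F / 2 = ENNReal.ofReal (Fr / 2) := by
    rw [ENNReal.ofReal_div_of_pos two_pos, ENNReal.ofReal_toReal hFtop,
      ENNReal.ofReal_ofNat]
  have hFeq : F = ENNReal.ofReal Fr := (ENNReal.ofReal_toReal hFtop).symm
  rw [hFeq, ENNReal.ofReal_rpow_of_pos hFrpos]
  calc ENNReal.ofReal (Fr ^ p)
      ≤ ENNReal.ofReal (2 ^ p * (a + 1) ^ (1 - p) *
          (t0 ^ ((a+1)*(p-1)) * (Fr / 2))) := by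
        apply ENNReal.ofReal_le_ofReal
        have hmid : ((a+1) * (Fr/2)) ^ (p-1) ≤ t0 ^ ((a+1)*(p-1)) := by
          rw [Real.rpow_mul ht0nonneg]
          apply Real.rpow_le_rpow (by positivity) ?_ (by linarith)
          calc (a+1) * (Fr/2) ≤ (a+1) * (t0 ^ (a+1) / (a+1)) := by
                apply mul_le_mul_of_nonneg_left hkey (by linarith)
            _ = t0 ^ (a+1) := by field_simp
        have hid : Fr ^ p = 2 ^ p * (a + 1) ^ (1 - p) *
            (((a+1) * (Fr/2)) ^ (p-1) * (Fr / 2)) := by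
          have h1 : ((a+1) * (Fr/2)) ^ (p-1) = (a+1) ^ (p-1) * (Fr/2) ^ (p-1) :=
            Real.mul_rpow (by linarith) (by positivity)
          have h2 : (a+1) ^ (1-p) * (a+1) ^ (p-1) = 1 := by
            rw [← Real.rpow_add ha1]; norm_num
          have h3 : (Fr/2) ^ (p-1) * (Fr/2) = (Fr/2) ^ p := by
            nth_rewrite 2 [← Real.rpow_one (Fr/2)]
            rw [← Real.rpow_add (by positivity)]
            ring_nf
          have h4 : (2:ℝ) ^ p * (Fr/2) ^ p = Fr ^ p := by
            rw [← Real.mul_rpow (by norm_num) (by positivity)]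
            congr 1
            ring
          calc Fr ^ p = 2 ^ p * (Fr/2) ^ p := h4.symm
            _ = 2 ^ p * 1 * ((Fr/2) ^ (p-1) * (Fr/2)) := by rw [h3]; ring
            _ = 2 ^ p * ((a+1) ^ (1-p) * (a+1) ^ (p-1)) * ((Fr/2) ^ (p-1) * (Fr/2)) := by
                rw [h2]
            _ = 2 ^ p * (a + 1) ^ (1 - p) *
                (((a+1) ^ (p-1) * (Fr/2) ^ (p-1)) * (Fr / 2)) := by ring
            _ = _ := by rw [← h1]
        rw [hid]
        have hFr2 : (0:ℝ) ≤ Fr / 2 := by positivity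
        exact mul_le_mul_of_nonneg_left (mul_le_mul_of_nonneg_right hmid hFr2) hCpos.le
    _ = ENNReal.ofReal (2 ^ p * (a + 1) ^ (1 - p)) *
          (ENNReal.ofReal (t0 ^ ((a+1)*(p-1))) * (F / 2)) := by
        rw [hF2, ← ENNReal.ofReal_mul (Real.rpow_nonneg ht0nonneg _),
          ← ENNReal.ofReal_mul hCpos.le]
    _ ≤ ENNReal.ofReal (2 ^ p * (a + 1) ^ (1 - p)) * J := by
        exact mul_le_mul_right hJlow _
end

section
/- Let ξ₀ > 0 and let r, s, t be real numbers with r < -1, r + t ≤ -1, and r + s + t ≤ -1. Then there is a constant C such that for every measurable f: (0,∞) → ℝ, ∫_1^∞ x^r · sup_{ξ₀ ≤ ξ ≤ x} ( ξ^s ∫_ξ^x y^t |f(y)| dy ) dx ≤ C ∫_0^∞ |f(x)| dx. -/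
open MeasureTheory Set

/-- Lintegral of `x ^ r` over `Ioi c`. -/
lemma lint_rpow_Ioi {r : ℝ} (hr : r < -1) {c : ℝ} (hc : 0 < c) :
    ∫⁻ x in Set.Ioi c, ENNReal.ofReal (x ^ r) = ENNReal.ofReal (-c ^ (r + 1) / (r + 1)) := by
  rw [← integral_Ioi_rpow_of_lt hr hc]
  rw [← ofReal_integral_eq_lintegral_ofReal (integrableOn_Ioi_rpow_of_lt hr hc)]
  filter_upwards [ae_restrict_mem measurableSet_Ioi] with x hx
  exact Real.rpow_nonneg (le_of_lt (hc.trans hx)) r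

theorem stmt1 (ξ₀ r s t : ℝ) (hξ₀ : 0 < ξ₀) (hr : r < -1)
    (hrt : r + t ≤ -1) (hrst : r + s + t ≤ -1) :
    ∃ C : ℝ, 0 < C ∧ ∀ f : ℝ → ℝ, Measurable f →
      ∫⁻ x in Set.Ioi (1 : ℝ),
          ENNReal.ofReal (x ^ r) *
            ⨆ ξ ∈ Set.Icc ξ₀ x,
              ENNReal.ofReal (ξ ^ s) *
                ∫⁻ y in Set.Ioc ξ x, ENNReal.ofReal (y ^ t * |f y|)
        ≤ ENNReal.ofReal C * ∫⁻ x in Set.Ioi (0 : ℝ), ENNReal.ofReal |f x| := by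
  have hA : 0 < -(r + 1) := by linarith
  set D : ℝ := ξ₀ ^ s + 1 + (ξ₀ ^ s * (ξ₀ ^ t + 1) + (ξ₀ ^ (s + t) + 1)) with hD
  have hDpos : 0 < D := by
    have := Real.rpow_pos_of_pos hξ₀ s
    have := Real.rpow_pos_of_pos hξ₀ t
    have := Real.rpow_pos_of_pos hξ₀ (s + t)
    nlinarith
  refine ⟨D / -(r + 1), div_pos hDpos hA, fun f hf => ?_⟩
  set C : ℝ := D / -(r + 1) with hC
  -- the auxiliary nonnegative function
  set g : ℝ → ENNReal := fun y => ENNReal.ofReal ((ξ₀ ^ s * y ^ t + y ^ (s + t)) * |f y|)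
    with hg
  have hgmeas : Measurable g := by
    apply Measurable.ennreal_ofReal
    exact (((measurable_id.pow measurable_const).const_mul _).add
      (measurable_id.pow measurable_const)).mul hf.abs
  -- key pointwise real inequality for the constant
  have hkey : ∀ y : ℝ, ξ₀ < y →
      (ξ₀ ^ s * y ^ t + y ^ (s + t)) * (max y 1) ^ (r + 1) ≤ D := by
    intro y hy
    have hy0 : 0 < y := hξ₀.trans hy
    have hξ₀s : 0 < ξ₀ ^ s := Real.rpow_pos_of_pos hξ₀ s
    rcases le_or_gt 1 y with h1 | h1
    · rw [max_eq_left h1]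
      have hyt : 0 ≤ y ^ t := Real.rpow_nonneg hy0.le t
      have e1 : y ^ t * y ^ (r + 1) = y ^ (t + (r + 1)) := (Real.rpow_add hy0 t (r + 1)).symm
      have e2 : y ^ (s + t) * y ^ (r + 1) = y ^ (s + t + (r + 1)) :=
        (Real.rpow_add hy0 (s + t) (r + 1)).symm
      have b1 : y ^ (t + (r + 1)) ≤ 1 :=
        Real.rpow_le_one_of_one_le_of_nonpos h1 (by linarith)
      have b2 : y ^ (s + t + (r + 1)) ≤ 1 :=
        Real.rpow_le_one_of_one_le_of_nonpos h1 (by linarith)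
      have hst : 0 ≤ y ^ (s + t) := Real.rpow_nonneg hy0.le (s + t)
      have hr1 : 0 ≤ y ^ (r + 1) := Real.rpow_nonneg hy0.le (r + 1)
      have hξ₀t : 0 < ξ₀ ^ t := Real.rpow_pos_of_pos hξ₀ t
      have hξ₀st : 0 < ξ₀ ^ (s + t) := Real.rpow_pos_of_pos hξ₀ (s + t)
      calc (ξ₀ ^ s * y ^ t + y ^ (s + t)) * y ^ (r + 1)
          = ξ₀ ^ s * (y ^ t * y ^ (r + 1)) + y ^ (s + t) * y ^ (r + 1) := by ring
        _ ≤ ξ₀ ^ s * 1 + 1 := by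
            rw [e1, e2]; exact add_le_add (by nlinarith) b2
        _ ≤ D := by rw [hD]; nlinarith
    · rw [max_eq_right h1.le, Real.one_rpow]
      have bt : y ^ t ≤ ξ₀ ^ t + 1 := by
        rcases le_or_gt 0 t with ht | ht
        · have : y ^ t ≤ 1 := Real.rpow_le_one hy0.le h1.le ht
          have : 0 < ξ₀ ^ t := Real.rpow_pos_of_pos hξ₀ t
          linarith
        · have : y ^ t ≤ ξ₀ ^ t := Real.rpow_le_rpow_of_nonpos hξ₀ hy.le ht.le
          linarith
      have bst : y ^ (s + t) ≤ ξ₀ ^ (s + t) + 1 := by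
        rcases le_or_gt 0 (s + t) with ht | ht
        · have : y ^ (s + t) ≤ 1 := Real.rpow_le_one hy0.le h1.le ht
          have : 0 < ξ₀ ^ (s + t) := Real.rpow_pos_of_pos hξ₀ (s + t)
          linarith
        · have : y ^ (s + t) ≤ ξ₀ ^ (s + t) := Real.rpow_le_rpow_of_nonpos hξ₀ hy.le ht.le
          linarith
      have hξ₀s1 : 0 < ξ₀ ^ s + 1 := by linarith
      rw [mul_one, hD]
      have hyt : 0 ≤ y ^ t := Real.rpow_nonneg hy0.le t
      nlinarith
  -- Step 1: bound the sup pointwise in x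
  have step1 : ∀ x : ℝ,
      ENNReal.ofReal (x ^ r) *
        ⨆ ξ ∈ Set.Icc ξ₀ x, ENNReal.ofReal (ξ ^ s) *
          ∫⁻ y in Set.Ioc ξ x, ENNReal.ofReal (y ^ t * |f y|)
      ≤ ∫⁻ y in Set.Ioc ξ₀ x, ENNReal.ofReal (x ^ r) * g y := by
    intro x
    rw [lintegral_const_mul' _ _ ENNReal.ofReal_ne_top]
    refine mul_le_mul_right ?_ _
    refine iSup₂_le fun ξ hξ => ?_
    rw [← lintegral_const_mul' _ _ ENNReal.ofReal_ne_top]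
    refine le_trans ?_ (lintegral_mono_set (Set.Ioc_subset_Ioc_left hξ.1))
    refine setLIntegral_mono' measurableSet_Ioc fun y hy => ?_
    have hξ0 : 0 < ξ := hξ₀.trans_le hξ.1
    have hy0 : 0 < y := hξ0.trans hy.1
    rw [← ENNReal.ofReal_mul (Real.rpow_nonneg hξ0.le s)]
    apply ENNReal.ofReal_le_ofReal
    have hξs : ξ ^ s ≤ ξ₀ ^ s + y ^ s := by
      rcases le_or_gt 0 s with h | h
      · have h1 : ξ ^ s ≤ y ^ s := Real.rpow_le_rpow hξ0.le hy.1.le h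
        have := Real.rpow_nonneg hξ₀.le s
        linarith
      · have h1 : ξ ^ s ≤ ξ₀ ^ s := Real.rpow_le_rpow_of_nonpos hξ₀ hξ.1 h.le
        have := Real.rpow_nonneg hy0.le s
        linarith
    have hadd : y ^ (s + t) = y ^ s * y ^ t := Real.rpow_add hy0 s t
    have hyt : 0 ≤ y ^ t := Real.rpow_nonneg hy0.le t
    have habs : 0 ≤ |f y| := abs_nonneg _
    calc ξ ^ s * (y ^ t * |f y|) = (ξ ^ s * y ^ t) * |f y| := by ring
      _ ≤ ((ξ₀ ^ s + y ^ s) * y ^ t) * |f y| := by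
          apply mul_le_mul_of_nonneg_right _ habs
          exact mul_le_mul_of_nonneg_right hξs hyt
      _ = (ξ₀ ^ s * y ^ t + y ^ (s + t)) * |f y| := by rw [hadd]; ring
  -- Step 2: express inner integral via an indicator on the product
  set S : Set (ℝ × ℝ) := {p : ℝ × ℝ | ξ₀ < p.2 ∧ p.2 ≤ p.1} with hS
  have hSmeas : MeasurableSet S := by
    exact (measurableSet_lt measurable_const measurable_snd).inter
      (measurableSet_le measurable_snd measurable_fst)
  set Φ : ℝ × ℝ → ENNReal := S.indicator (fun p => ENNReal.ofReal (p.1 ^ r) * g p.2) with hΦ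
  have hΦmeas : Measurable Φ := by
    apply Measurable.indicator _ hSmeas
    exact ((measurable_fst.pow measurable_const).ennreal_ofReal).mul
      (hgmeas.comp measurable_snd)
  have hind : ∀ x y : ℝ,
      (Set.Ioc ξ₀ x).indicator (fun y => ENNReal.ofReal (x ^ r) * g y) y = Φ (x, y) := by
    intro x y
    by_cases h : y ∈ Set.Ioc ξ₀ x
    · rw [Set.indicator_of_mem h, hΦ, Set.indicator_of_mem]
      exact ⟨h.1, h.2⟩
    · rw [Set.indicator_of_notMem h, hΦ,
        Set.indicator_of_notMem (fun hc2 => h ⟨hc2.1, hc2.2⟩)]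
  -- Step 3: Tonelli
  have step3 :
      (∫⁻ x in Set.Ioi (1 : ℝ), ∫⁻ y in Set.Ioc ξ₀ x, ENNReal.ofReal (x ^ r) * g y)
        = ∫⁻ y, ∫⁻ x in Set.Ioi (1 : ℝ), Φ (x, y) := by
    have : ∀ x : ℝ, (∫⁻ y in Set.Ioc ξ₀ x, ENNReal.ofReal (x ^ r) * g y)
        = ∫⁻ y, Φ (x, y) := by
      intro x
      rw [← lintegral_indicator measurableSet_Ioc]
      exact lintegral_congr fun y => hind x y
    simp_rw [this]
    exact lintegral_lintegral_swap (hΦmeas.aemeasurable)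
  -- Step 4: bound the inner x-integral for fixed y
  have step4 : ∀ y : ℝ,
      (∫⁻ x in Set.Ioi (1 : ℝ), Φ (x, y))
        ≤ (Set.Ioi ξ₀).indicator (fun y => ENNReal.ofReal C * ENNReal.ofReal |f y|) y := by
    intro y
    by_cases hy : ξ₀ < y
    · rw [Set.indicator_of_mem (Set.mem_Ioi.mpr hy)]
      have hy0 : 0 < y := hξ₀.trans hy
      set M : ℝ := max y 1 with hM
      have hM0 : 0 < M := lt_max_of_lt_right one_pos
      have hb : ∀ x : ℝ, Φ (x, y)
          ≤ (Set.Ici y).indicator (fun x => ENNReal.ofReal (x ^ r)) x * g y := by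
        intro x
        rw [hΦ]
        by_cases h : (x, y) ∈ S
        · simp only [Set.indicator_of_mem h,
            Set.indicator_of_mem (show x ∈ Set.Ici y from h.2)]
          exact le_rfl
        · rw [Set.indicator_of_notMem h]
          exact zero_le
      calc (∫⁻ x in Set.Ioi (1 : ℝ), Φ (x, y))
          ≤ ∫⁻ x in Set.Ioi (1 : ℝ),
              (Set.Ici y).indicator (fun x => ENNReal.ofReal (x ^ r)) x * g y :=
            lintegral_mono fun x => hb x
        _ = (∫⁻ x in Set.Ioi (1 : ℝ),
              (Set.Ici y).indicator (fun x => ENNReal.ofReal (x ^ r)) x) * g y := by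
            rw [lintegral_mul_const' _ _ ENNReal.ofReal_ne_top]
        _ ≤ ENNReal.ofReal (-M ^ (r + 1) / (r + 1)) * g y := by
            refine mul_le_mul_left ?_ _
            rw [lintegral_indicator measurableSet_Ici,
              Measure.restrict_restrict measurableSet_Ici]
            calc ∫⁻ a in Set.Ici y ∩ Set.Ioi 1, ENNReal.ofReal (a ^ r)
                ≤ ∫⁻ a in Set.Ici M, ENNReal.ofReal (a ^ r) :=
                  lintegral_mono_set fun x hx => Set.mem_Ici.mpr (max_le hx.1 hx.2.le)
              _ = ∫⁻ a in Set.Ioi M, ENNReal.ofReal (a ^ r) :=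
                  (setLIntegral_congr Ioi_ae_eq_Ici).symm
              _ = ENNReal.ofReal (-M ^ (r + 1) / (r + 1)) := lint_rpow_Ioi hr hM0
        _ ≤ ENNReal.ofReal C * ENNReal.ofReal |f y| := by
            rw [hg, mul_comm]
            rw [← ENNReal.ofReal_mul (by positivity)]
            rw [← ENNReal.ofReal_mul (by
              have h1 : 0 ≤ (ξ₀ ^ s * y ^ t + y ^ (s + t)) := by positivity
              positivity)]
            apply ENNReal.ofReal_le_ofReal
            have hk := hkey y hy
            have hMr : 0 ≤ M ^ (r + 1) := Real.rpow_nonneg hM0.le (r + 1)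
            have h2 : 0 ≤ (ξ₀ ^ s * y ^ t + y ^ (s + t)) := by positivity
            have habs : 0 ≤ |f y| := abs_nonneg _
            have : (ξ₀ ^ s * y ^ t + y ^ (s + t)) * |f y| * (-M ^ (r + 1) / (r + 1))
                = ((ξ₀ ^ s * y ^ t + y ^ (s + t)) * M ^ (r + 1)) * |f y| / -(r + 1) := by
              rw [neg_div, div_neg]
              ring
            rw [this, hC, div_mul_eq_mul_div]
            gcongr
        _ = ENNReal.ofReal C * ENNReal.ofReal |f y| := rfl
    · rw [Set.indicator_of_notMem (fun hc => hy (Set.mem_Ioi.mp hc))]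
      have : ∀ x : ℝ, Φ (x, y) = 0 := by
        intro x
        rw [hΦ, Set.indicator_of_notMem]
        intro hc2
        exact hy hc2.1
      simp [this]
  -- assemble
  calc ∫⁻ x in Set.Ioi (1 : ℝ),
          ENNReal.ofReal (x ^ r) *
            ⨆ ξ ∈ Set.Icc ξ₀ x, ENNReal.ofReal (ξ ^ s) *
              ∫⁻ y in Set.Ioc ξ x, ENNReal.ofReal (y ^ t * |f y|)
      ≤ ∫⁻ x in Set.Ioi (1 : ℝ), ∫⁻ y in Set.Ioc ξ₀ x, ENNReal.ofReal (x ^ r) * g y :=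
        lintegral_mono fun x => step1 x
    _ = ∫⁻ y, ∫⁻ x in Set.Ioi (1 : ℝ), Φ (x, y) := step3
    _ ≤ ∫⁻ y, (Set.Ioi ξ₀).indicator (fun y => ENNReal.ofReal C * ENNReal.ofReal |f y|) y :=
        lintegral_mono fun y => step4 y
    _ = ∫⁻ y in Set.Ioi ξ₀, ENNReal.ofReal C * ENNReal.ofReal |f y| :=
        lintegral_indicator measurableSet_Ioi _
    _ ≤ ∫⁻ y in Set.Ioi (0 : ℝ), ENNReal.ofReal C * ENNReal.ofReal |f y| :=
        lintegral_mono_set (Set.Ioi_subset_Ioi hξ₀.le)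
    _ = ENNReal.ofReal C * ∫⁻ x in Set.Ioi (0 : ℝ), ENNReal.ofReal |f x| :=
        lintegral_const_mul' _ _ ENNReal.ofReal_ne_top
end

section
/- Let t, r, s be real numbers with t ≤ 0, r + t ≤ -1, and r + s + t ≤ -1, with strict inequality in the last two in case of equality in the first. Then for any ξ₀ > 0 there is a constant C such that for every measurable f: (0,∞) → ℝ, ∫_1^∞ x^r · sup_{ξ₀ ≤ ξ ≤ x} ( ξ^s ∫_x^∞ y^t |f(y)| dy ) dx ≤ C ∫_0^∞ |f(x)| dx. -/
open MeasureTheory Set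

private lemma lint_eq (a y : ℝ) (hy : 1 ≤ y) :
    ∫⁻ x in Set.Ioo 1 y, ENNReal.ofReal (x ^ a) =
      ENNReal.ofReal (∫ x in (1:ℝ)..y, x ^ a) := by
  have hcont : ContinuousOn (fun x : ℝ => x ^ a) (Set.Icc 1 y) := fun x hx =>
    (Real.continuousAt_rpow_const x a (Or.inl (by linarith [hx.1]))).continuousWithinAt
  have hint : IntegrableOn (fun x : ℝ => x ^ a) (Set.Ioo 1 y) :=
    (hcont.integrableOn_Icc).mono_set Set.Ioo_subset_Icc_self
  rw [intervalIntegral.integral_of_le hy, MeasureTheory.integral_Ioc_eq_integral_Ioo,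
    MeasureTheory.ofReal_integral_eq_lintegral_ofReal hint ?_]
  exact (ae_restrict_iff' measurableSet_Ioo).2 (Filter.Eventually.of_forall fun x hx =>
    Real.rpow_nonneg (by linarith [hx.1]) a)

private lemma aux_bound (a t : ℝ) (ht : t ≤ 0) (hat : a + t ≤ -1)
    (hs : t = 0 → a + t < -1) :
    ∃ K : ℝ, 0 < K ∧ ∀ y : ℝ, 1 ≤ y →
      ∫⁻ x in Set.Ioo 1 y, ENNReal.ofReal (x ^ a) ≤ ENNReal.ofReal (K * y ^ (-t)) := by
  rcases lt_trichotomy a (-1) with ha | ha | ha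
  · -- a < -1
    refine ⟨1 / (-a - 1), one_div_pos.mpr (by linarith), fun y hy => ?_⟩
    rw [lint_eq a y hy]
    apply ENNReal.ofReal_le_ofReal
    have h0 : (0:ℝ) ∉ Set.uIcc 1 y := by
      rw [Set.uIcc_of_le hy]; intro h; exact absurd h.1 (by norm_num)
    rw [integral_rpow (Or.inr ⟨ne_of_lt ha, h0⟩), Real.one_rpow]
    have hc : a + 1 < 0 := by linarith
    rw [div_le_iff_of_neg hc]
    have h1 : 1 ≤ y ^ (-t) := Real.one_le_rpow hy (by linarith)
    have h2 : 0 ≤ y ^ (a + 1) := Real.rpow_nonneg (by linarith) _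
    have hne : -a - 1 ≠ 0 := ne_of_gt (by linarith)
    have : 1 / (-a - 1) * y ^ (-t) * (a + 1) = -y ^ (-t) := by
      field_simp
      ring
    rw [this]; linarith
  · -- a = -1
    subst ha
    have htlt : t < 0 := by
      rcases ht.lt_or_eq with h | h
      · exact h
      · exfalso; have := hs h; linarith
    refine ⟨1 / (-t), one_div_pos.mpr (by linarith), fun y hy => ?_⟩
    rw [lint_eq _ y hy]
    apply ENNReal.ofReal_le_ofReal
    have h0 : (0:ℝ) ∉ Set.uIcc 1 y := by
      rw [Set.uIcc_of_le hy]; intro h; exact absurd h.1 (by norm_num)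
    have hrw : ∫ x in (1:ℝ)..y, x ^ (-1:ℝ) = ∫ x in (1:ℝ)..y, x⁻¹ := by
      apply intervalIntegral.integral_congr
      intro x _
      simp [Real.rpow_neg_one]
    rw [hrw, integral_inv h0, div_one]
    have hy0 : 0 < y := by linarith
    have hlog : Real.log (y ^ (-t)) = (-t) * Real.log y := Real.log_rpow hy0 _
    have h2 : Real.log (y ^ (-t)) ≤ y ^ (-t) - 1 :=
      Real.log_le_sub_one_of_pos (Real.rpow_pos_of_pos hy0 _)
    rw [show 1 / (-t) * y ^ (-t) = y ^ (-t) / (-t) by ring, le_div_iff₀ (by linarith : (0:ℝ) < -t)]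
    nlinarith [hlog, h2]
  · -- -1 < a
    refine ⟨1 / (a + 1), one_div_pos.mpr (by linarith), fun y hy => ?_⟩
    rw [lint_eq a y hy]
    apply ENNReal.ofReal_le_ofReal
    rw [integral_rpow (Or.inl ha), Real.one_rpow]
    have hc : (0:ℝ) < a + 1 := by linarith
    have h3 : y ^ (a + 1) ≤ y ^ (-t) := Real.rpow_le_rpow_of_exponent_le hy (by linarith)
    rw [div_le_iff₀ hc]
    have hne : a + 1 ≠ 0 := ne_of_gt hc
    have : 1 / (a + 1) * y ^ (-t) * (a + 1) = y ^ (-t) := by field_simp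
    rw [this]; linarith

private lemma swap_lemma (a t : ℝ) (K : ℝ) (hK : 0 < K)
    (hbound : ∀ y : ℝ, 1 ≤ y →
      ∫⁻ x in Set.Ioo 1 y, ENNReal.ofReal (x ^ a) ≤ ENNReal.ofReal (K * y ^ (-t)))
    (f : ℝ → ℝ) (hf : Measurable f) :
    ∫⁻ x in Set.Ioi (1:ℝ), ENNReal.ofReal (x ^ a) *
        ∫⁻ y in Set.Ioi x, ENNReal.ofReal (y ^ t * |f y|)
      ≤ ENNReal.ofReal K * ∫⁻ x in Set.Ioi (0:ℝ), ENNReal.ofReal |f x| := by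
  set g : ℝ → ENNReal := fun y => ENNReal.ofReal (y ^ t * |f y|) with hg
  have hgm : Measurable g :=
    ENNReal.measurable_ofReal.comp ((measurable_id.pow measurable_const).mul hf.abs)
  have hram : Measurable fun x : ℝ => ENNReal.ofReal (x ^ a) :=
    ENNReal.measurable_ofReal.comp (measurable_id.pow measurable_const)
  set F : ℝ × ℝ → ENNReal :=
    fun p => Set.indicator {q : ℝ × ℝ | q.1 < q.2}
      (fun q => ENNReal.ofReal (q.1 ^ a) * g q.2) p with hF
  have hFm : Measurable F := by
    apply Measurable.indicator
    · exact (hram.comp measurable_fst).mul (hgm.comp measurable_snd)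
    · exact measurableSet_lt measurable_fst measurable_snd
  have step1 : ∫⁻ x in Set.Ioi (1:ℝ), ENNReal.ofReal (x ^ a) * ∫⁻ y in Set.Ioi x, g y
      = ∫⁻ x in Set.Ioi (1:ℝ), ∫⁻ y in Set.Ioi (1:ℝ), F (x, y) := by
    apply setLIntegral_congr_fun measurableSet_Ioi
    unfold Set.EqOn
    intro x hx
    beta_reduce
    have hpt : ∀ y, F (x, y) = Set.indicator (Set.Ioi x)
        (fun y => ENNReal.ofReal (x ^ a) * g y) y := by
      intro y
      simp only [hF, Set.indicator_apply, Set.mem_setOf_eq, Set.mem_Ioi]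
    rw [lintegral_congr hpt, lintegral_indicator measurableSet_Ioi,
      Measure.restrict_restrict measurableSet_Ioi,
      Set.inter_eq_left.2 (Set.Ioi_subset_Ioi (le_of_lt hx)),
      lintegral_const_mul _ hgm]
  have step2 : ∫⁻ x in Set.Ioi (1:ℝ), ∫⁻ y in Set.Ioi (1:ℝ), F (x, y)
      = ∫⁻ y in Set.Ioi (1:ℝ), ∫⁻ x in Set.Ioi (1:ℝ), F (x, y) := by
    exact lintegral_lintegral_swap hFm.aemeasurable
  have step3 : ∫⁻ y in Set.Ioi (1:ℝ), ∫⁻ x in Set.Ioi (1:ℝ), F (x, y)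
      = ∫⁻ y in Set.Ioi (1:ℝ), (∫⁻ x in Set.Ioo 1 y, ENNReal.ofReal (x ^ a)) * g y := by
    apply setLIntegral_congr_fun measurableSet_Ioi
    unfold Set.EqOn
    intro y _
    beta_reduce
    have hpt : ∀ x, F (x, y) = Set.indicator (Set.Iio y)
        (fun x => ENNReal.ofReal (x ^ a) * g y) x := by
      intro x
      simp only [hF, Set.indicator_apply, Set.mem_setOf_eq, Set.mem_Iio]
    rw [lintegral_congr hpt, lintegral_indicator measurableSet_Iio,
      Measure.restrict_restrict measurableSet_Iio,
      show Set.Iio y ∩ Set.Ioi 1 = Set.Ioo 1 y by rw [Set.inter_comm, Set.Ioi_inter_Iio],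
      lintegral_mul_const _ hram]
  rw [step1, step2, step3]
  have step4 : ∫⁻ y in Set.Ioi (1:ℝ), (∫⁻ x in Set.Ioo 1 y, ENNReal.ofReal (x ^ a)) * g y
      ≤ ∫⁻ y in Set.Ioi (1:ℝ), ENNReal.ofReal K * ENNReal.ofReal |f y| := by
    apply setLIntegral_mono' measurableSet_Ioi
    intro y hy
    have hy1 : (1:ℝ) < y := hy
    have hy0 : (0:ℝ) < y := by linarith
    calc (∫⁻ x in Set.Ioo 1 y, ENNReal.ofReal (x ^ a)) * g y
        ≤ ENNReal.ofReal (K * y ^ (-t)) * g y :=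
          mul_le_mul_left (hbound y hy1.le) _
      _ = ENNReal.ofReal K * ENNReal.ofReal |f y| := by
          rw [hg]
          rw [← ENNReal.ofReal_mul (by positivity)]
          have hyt : y ^ (-t) * y ^ t = 1 := by
            rw [← Real.rpow_add hy0]; simp
          have key : K * y ^ (-t) * (y ^ t * |f y|) = K * |f y| := by
            calc K * y ^ (-t) * (y ^ t * |f y|) = K * (y ^ (-t) * y ^ t) * |f y| := by ring
              _ = K * |f y| := by rw [hyt]; ring
          rw [key, ENNReal.ofReal_mul hK.le]
  calc ∫⁻ y in Set.Ioi (1:ℝ), (∫⁻ x in Set.Ioo 1 y, ENNReal.ofReal (x ^ a)) * g y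
      ≤ ∫⁻ y in Set.Ioi (1:ℝ), ENNReal.ofReal K * ENNReal.ofReal |f y| := step4
    _ = ENNReal.ofReal K * ∫⁻ y in Set.Ioi (1:ℝ), ENNReal.ofReal |f y| :=
        lintegral_const_mul _ (ENNReal.measurable_ofReal.comp hf.abs)
    _ ≤ ENNReal.ofReal K * ∫⁻ y in Set.Ioi (0:ℝ), ENNReal.ofReal |f y| :=
        mul_le_mul_right (lintegral_mono_set (Set.Ioi_subset_Ioi zero_le_one)) _

theorem stmt3 (t r s : ℝ) (ht : t ≤ 0) (hrt : r + t ≤ -1)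
    (hrst : r + s + t ≤ -1)
    (hstrict : t = 0 → r + t < -1 ∧ r + s + t < -1)
    (ξ₀ : ℝ) (hξ₀ : 0 < ξ₀) :
    ∃ C : ℝ, 0 < C ∧ ∀ f : ℝ → ℝ, Measurable f →
      ∫⁻ x in Set.Ioi (1 : ℝ),
          ENNReal.ofReal (x ^ r) *
            ⨆ ξ ∈ Set.Icc ξ₀ x,
              ENNReal.ofReal (ξ ^ s) *
                ∫⁻ y in Set.Ioi x, ENNReal.ofReal (y ^ t * |f y|)
        ≤ ENNReal.ofReal C * ∫⁻ x in Set.Ioi (0 : ℝ), ENNReal.ofReal |f x| := by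
  obtain ⟨K₁, hK₁, hb₁⟩ := aux_bound r t ht hrt (fun h => (hstrict h).1)
  obtain ⟨K₂, hK₂, hb₂⟩ := aux_bound (r + s) t ht (by linarith)
    (fun h => by have := (hstrict h).2; linarith)
  refine ⟨ξ₀ ^ s * K₁ + K₂, by positivity, fun f hf => ?_⟩
  set g : ℝ → ENNReal := fun y => ENNReal.ofReal (y ^ t * |f y|) with hg
  have hgm : Measurable g :=
    ENNReal.measurable_ofReal.comp ((measurable_id.pow measurable_const).mul hf.abs)
  set I : ℝ → ENNReal := fun x => ∫⁻ y in Set.Ioi x, g y with hI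
  have hIm : Measurable I := by
    apply Antitone.measurable
    intro x x' hxx'
    exact lintegral_mono_set (Set.Ioi_subset_Ioi hxx')
  have hram : ∀ b : ℝ, Measurable fun x : ℝ => ENNReal.ofReal (x ^ b) := fun b =>
    ENNReal.measurable_ofReal.comp (measurable_id.pow measurable_const)
  set T := ∫⁻ x in Set.Ioi (0:ℝ), ENNReal.ofReal |f x| with hT
  have step1 : ∫⁻ x in Set.Ioi (1 : ℝ),
      ENNReal.ofReal (x ^ r) * ⨆ ξ ∈ Set.Icc ξ₀ x, ENNReal.ofReal (ξ ^ s) * I x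
      ≤ ∫⁻ x in Set.Ioi (1:ℝ),
        (ENNReal.ofReal (ξ₀ ^ s) * (ENNReal.ofReal (x ^ r) * I x)
          + ENNReal.ofReal (x ^ (r + s)) * I x) := by
    apply setLIntegral_mono' measurableSet_Ioi
    intro x hx
    have hx1 : (1:ℝ) < x := hx
    have hx0 : (0:ℝ) < x := by linarith
    have hsup : (⨆ ξ ∈ Set.Icc ξ₀ x, ENNReal.ofReal (ξ ^ s) * I x)
        ≤ ENNReal.ofReal (ξ₀ ^ s + x ^ s) * I x := by
      apply iSup₂_le
      intro ξ hξ
      apply mul_le_mul_left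
      apply ENNReal.ofReal_le_ofReal
      rcases le_or_gt 0 s with hs0 | hs0
      · have h1 : ξ ^ s ≤ x ^ s := Real.rpow_le_rpow (by linarith [hξ.1]) hξ.2 hs0
        have h2 : 0 ≤ ξ₀ ^ s := Real.rpow_nonneg hξ₀.le _
        linarith
      · have h1 : ξ ^ s ≤ ξ₀ ^ s := Real.rpow_le_rpow_of_nonpos hξ₀ hξ.1 hs0.le
        have h2 : 0 ≤ x ^ s := Real.rpow_nonneg hx0.le _
        linarith
    calc ENNReal.ofReal (x ^ r) * ⨆ ξ ∈ Set.Icc ξ₀ x, ENNReal.ofReal (ξ ^ s) * I x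
        ≤ ENNReal.ofReal (x ^ r) * (ENNReal.ofReal (ξ₀ ^ s + x ^ s) * I x) :=
          mul_le_mul_right hsup _
      _ = ENNReal.ofReal (ξ₀ ^ s) * (ENNReal.ofReal (x ^ r) * I x)
          + ENNReal.ofReal (x ^ (r + s)) * I x := by
          rw [← mul_assoc, ← ENNReal.ofReal_mul (Real.rpow_nonneg hx0.le r)]
          have : x ^ r * (ξ₀ ^ s + x ^ s) = ξ₀ ^ s * x ^ r + x ^ (r + s) := by
            rw [Real.rpow_add hx0]; ring
          rw [this, ENNReal.ofReal_add (by positivity) (Real.rpow_nonneg hx0.le _),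
            ENNReal.ofReal_mul (Real.rpow_nonneg hξ₀.le s), add_mul, mul_assoc]
  have step2 : ∫⁻ x in Set.Ioi (1:ℝ),
      (ENNReal.ofReal (ξ₀ ^ s) * (ENNReal.ofReal (x ^ r) * I x)
        + ENNReal.ofReal (x ^ (r + s)) * I x)
      = ENNReal.ofReal (ξ₀ ^ s) * (∫⁻ x in Set.Ioi (1:ℝ), ENNReal.ofReal (x ^ r) * I x)
        + ∫⁻ x in Set.Ioi (1:ℝ), ENNReal.ofReal (x ^ (r + s)) * I x := by
    rw [lintegral_add_left (f := fun x => ENNReal.ofReal (ξ₀ ^ s) * (ENNReal.ofReal (x ^ r) * I x)) (measurable_const.mul ((hram r).mul hIm)),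
      lintegral_const_mul _ (f := fun x => ENNReal.ofReal (x ^ r) * I x) ((hram r).mul hIm)]
  have hbd1 : ∫⁻ x in Set.Ioi (1:ℝ), ENNReal.ofReal (x ^ r) * I x
      ≤ ENNReal.ofReal K₁ * T := swap_lemma r t K₁ hK₁ hb₁ f hf
  have hbd2 : ∫⁻ x in Set.Ioi (1:ℝ), ENNReal.ofReal (x ^ (r + s)) * I x
      ≤ ENNReal.ofReal K₂ * T := swap_lemma (r + s) t K₂ hK₂ hb₂ f hf
  calc ∫⁻ x in Set.Ioi (1 : ℝ),
      ENNReal.ofReal (x ^ r) * ⨆ ξ ∈ Set.Icc ξ₀ x, ENNReal.ofReal (ξ ^ s) * I x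
      ≤ ENNReal.ofReal (ξ₀ ^ s) * (∫⁻ x in Set.Ioi (1:ℝ), ENNReal.ofReal (x ^ r) * I x)
        + ∫⁻ x in Set.Ioi (1:ℝ), ENNReal.ofReal (x ^ (r + s)) * I x := step1.trans step2.le
    _ ≤ ENNReal.ofReal (ξ₀ ^ s) * (ENNReal.ofReal K₁ * T) + ENNReal.ofReal K₂ * T := by
        exact add_le_add (mul_le_mul_right hbd1 (ENNReal.ofReal (ξ₀ ^ s))) hbd2
    _ = ENNReal.ofReal (ξ₀ ^ s * K₁ + K₂) * T := by
        rw [ENNReal.ofReal_add (by positivity) hK₂.le,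
          ENNReal.ofReal_mul (Real.rpow_nonneg hξ₀.le s), add_mul, mul_assoc]
end

section
/- Let s < 0, s + t ≤ 0, and r + s + t ≤ -1, with equality holding in at most one of the last two inequalities. Then there is a constant C such that for every measurable f: (0,∞) → ℝ, ∫_1^∞ x^r · sup_{ξ ≥ x} ( ξ^s ∫_x^ξ y^t |f(y)| dy ) dx ≤ C ∫_0^∞ |f(x)| dx. -/
open MeasureTheory Set ENNReal

lemma key_bound (r s t : ℝ) (hst : s + t ≤ 0)
    (hrst : r + s + t ≤ -1) (hone : ¬ (s + t = 0 ∧ r + s + t = -1)) :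
    ∃ K : ℝ, 0 < K ∧ ∀ y : ℝ, 1 < y →
      (∫⁻ x in Set.Ioo 1 y, ENNReal.ofReal (x ^ r)) * ENNReal.ofReal (y ^ (s + t))
        ≤ ENNReal.ofReal K := by
  rcases eq_or_lt_of_le hst with h0 | h0
  · -- s + t = 0, so r < -1
    have hr : r < -1 := by
      rcases eq_or_lt_of_le hrst with h | h
      · exact absurd ⟨h0, h⟩ hone
      · linarith
    refine ⟨-1 / (r + 1), by rw [_root_.div_pos_iff]; right; constructor <;> linarith,
      fun y hy => ?_⟩
    have hy0 : (0:ℝ) < y := by linarith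
    rw [h0, Real.rpow_zero, ENNReal.ofReal_one, mul_one]
    calc ∫⁻ x in Set.Ioo 1 y, ENNReal.ofReal (x ^ r)
        ≤ ∫⁻ x in Set.Ioi (1:ℝ), ENNReal.ofReal (x ^ r) :=
          lintegral_mono_set Ioo_subset_Ioi_self
      _ = ENNReal.ofReal (∫ x in Set.Ioi (1:ℝ), x ^ r) := by
          rw [← ofReal_integral_eq_lintegral_ofReal (integrableOn_Ioi_rpow_of_lt hr one_pos)]
          filter_upwards [ae_restrict_mem measurableSet_Ioi] with x hx
          exact Real.rpow_nonneg (by linarith [mem_Ioi.mp hx]) r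
      _ = ENNReal.ofReal (-1 / (r + 1)) := by
          rw [integral_Ioi_rpow_of_lt hr one_pos, Real.one_rpow]
  · -- s + t < 0
    set r' : ℝ := -1 - (s + t) with hr'def
    have hr' : -1 < r' := by simp [hr'def]; linarith
    have hrr' : r ≤ r' := by simp [hr'def]; linarith
    have hr1 : (0:ℝ) < r' + 1 := by linarith
    refine ⟨1 / (r' + 1), by positivity, fun y hy => ?_⟩
    have hy0 : (0:ℝ) < y := by linarith
    have hkey : ∫⁻ x in Set.Ioo 1 y, ENNReal.ofReal (x ^ r)
        ≤ ENNReal.ofReal (y ^ (r' + 1) / (r' + 1)) := by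
      calc ∫⁻ x in Set.Ioo 1 y, ENNReal.ofReal (x ^ r)
          ≤ ∫⁻ x in Set.Ioo 1 y, ENNReal.ofReal (x ^ r') := by
            refine setLIntegral_mono' measurableSet_Ioo fun x hx => ?_
            exact ENNReal.ofReal_le_ofReal
              (Real.rpow_le_rpow_of_exponent_le hx.1.le hrr')
        _ ≤ ∫⁻ x in Set.Ioc 0 y, ENNReal.ofReal (x ^ r') :=
            lintegral_mono_set (fun x hx => ⟨by linarith [hx.1], hx.2.le⟩)
        _ = ENNReal.ofReal (∫ x in Set.Ioc 0 y, x ^ r') := by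
            rw [← ofReal_integral_eq_lintegral_ofReal]
            · exact (intervalIntegrable_iff_integrableOn_Ioc_of_le hy0.le).mp
                (intervalIntegral.intervalIntegrable_rpow' hr')
            · filter_upwards [ae_restrict_mem measurableSet_Ioc] with x hx
              exact Real.rpow_nonneg hx.1.le r'
        _ = ENNReal.ofReal (y ^ (r' + 1) / (r' + 1)) := by
            rw [← intervalIntegral.integral_of_le hy0.le, integral_rpow (Or.inl hr'),
              Real.zero_rpow (by linarith : r' + 1 ≠ 0)]
            ring_nf
    calc (∫⁻ x in Set.Ioo 1 y, ENNReal.ofReal (x ^ r)) * ENNReal.ofReal (y ^ (s + t))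
        ≤ ENNReal.ofReal (y ^ (r' + 1) / (r' + 1)) * ENNReal.ofReal (y ^ (s + t)) :=
          mul_le_mul_left hkey _
      _ = ENNReal.ofReal (y ^ (r' + 1) * y ^ (s + t) / (r' + 1)) := by
          rw [← ENNReal.ofReal_mul (by positivity)]; ring_nf
      _ = ENNReal.ofReal (1 / (r' + 1)) := by
          rw [← Real.rpow_add hy0]
          have he : r' + 1 + (s + t) = 0 := by rw [hr'def]; ring
          rw [he, Real.rpow_zero]

theorem stmt4 (r s t : ℝ) (hs : s < 0) (hst : s + t ≤ 0)
    (hrst : r + s + t ≤ -1) (hone : ¬ (s + t = 0 ∧ r + s + t = -1)) :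
    ∃ C : ℝ, 0 < C ∧ ∀ f : ℝ → ℝ, Measurable f →
      ∫⁻ x in Set.Ioi (1 : ℝ),
          ENNReal.ofReal (x ^ r) *
            ⨆ ξ ∈ Set.Ici x,
              ENNReal.ofReal (ξ ^ s) *
                ∫⁻ y in Set.Ioc x ξ, ENNReal.ofReal (y ^ t * |f y|)
        ≤ ENNReal.ofReal C * ∫⁻ x in Set.Ioi (0 : ℝ), ENNReal.ofReal |f x| := by
  obtain ⟨K, hK, hKy⟩ := key_bound r s t hst hrst hone
  refine ⟨K, hK, fun f hf => ?_⟩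
  set g : ℝ → ℝ≥0∞ := fun y => ENNReal.ofReal (y ^ (s + t) * |f y|) with hgdef
  have hg_meas : Measurable g :=
    ((measurable_id.pow_const (s + t)).mul hf.abs).ennreal_ofReal
  -- Step A : pointwise bound of the supremum
  have stepA : ∀ x : ℝ, 1 < x →
      (⨆ ξ ∈ Set.Ici x, ENNReal.ofReal (ξ ^ s) *
        ∫⁻ y in Set.Ioc x ξ, ENNReal.ofReal (y ^ t * |f y|))
      ≤ ∫⁻ y in Set.Ioi x, g y := by
    intro x hx
    refine iSup₂_le fun ξ hξ => ?_
    calc ENNReal.ofReal (ξ ^ s) * ∫⁻ y in Set.Ioc x ξ, ENNReal.ofReal (y ^ t * |f y|)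
        = ∫⁻ y in Set.Ioc x ξ, ENNReal.ofReal (ξ ^ s) * ENNReal.ofReal (y ^ t * |f y|) :=
          (lintegral_const_mul' _ _ ENNReal.ofReal_ne_top).symm
      _ ≤ ∫⁻ y in Set.Ioc x ξ, g y := by
          refine setLIntegral_mono' measurableSet_Ioc fun y hy => ?_
          have hy0 : (0:ℝ) < y := by linarith [hy.1]
          rw [← ENNReal.ofReal_mul (Real.rpow_nonneg (by linarith [mem_Ici.mp hξ]) s)]
          refine ENNReal.ofReal_le_ofReal ?_
          have h1 : ξ ^ s ≤ y ^ s := Real.rpow_le_rpow_of_nonpos hy0 hy.2 hs.le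
          calc ξ ^ s * (y ^ t * |f y|) ≤ y ^ s * (y ^ t * |f y|) :=
                mul_le_mul_of_nonneg_right h1 (by positivity)
            _ = y ^ (s + t) * |f y| := by rw [Real.rpow_add hy0]; ring
      _ ≤ ∫⁻ y in Set.Ioi x, g y := lintegral_mono_set Ioc_subset_Ioi_self
  -- The double integral function
  set F : ℝ × ℝ → ℝ≥0∞ := fun p => ENNReal.ofReal (p.1 ^ r) * (Set.Ioi p.1).indicator g p.2
    with hFdef
  have hF_meas : Measurable F := by
    have h1 : Measurable fun p : ℝ × ℝ => ENNReal.ofReal (p.1 ^ r) :=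
      (measurable_fst.pow_const r).ennreal_ofReal
    have h2 : (fun p : ℝ × ℝ => (Set.Ioi p.1).indicator g p.2)
        = {q : ℝ × ℝ | q.1 < q.2}.indicator (fun q => g q.2) := by
      funext p
      by_cases hp : p.1 < p.2 <;> simp [Set.indicator, hp]
    exact h1.mul (h2 ▸ (hg_meas.comp measurable_snd).indicator
      (measurableSet_lt measurable_fst measurable_snd))
  calc ∫⁻ x in Set.Ioi (1 : ℝ),
          ENNReal.ofReal (x ^ r) *
            ⨆ ξ ∈ Set.Ici x, ENNReal.ofReal (ξ ^ s) *
                ∫⁻ y in Set.Ioc x ξ, ENNReal.ofReal (y ^ t * |f y|)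
      ≤ ∫⁻ x in Set.Ioi (1:ℝ), ENNReal.ofReal (x ^ r) * ∫⁻ y in Set.Ioi x, g y := by
        refine setLIntegral_mono' measurableSet_Ioi fun x hx => ?_
        exact mul_le_mul_right (stepA x hx) _
    _ = ∫⁻ x in Set.Ioi (1:ℝ), ∫⁻ y in Set.Ioi (1:ℝ), F (x, y) := by
        refine setLIntegral_congr_fun measurableSet_Ioi (fun x hx => ?_)
        have hsub : Set.Ioi x ⊆ Set.Ioi (1:ℝ) := Ioi_subset_Ioi (le_of_lt hx)
        rw [show (fun y => F (x, y)) = fun y => ENNReal.ofReal (x ^ r) *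
            (Set.Ioi x).indicator g y from rfl]
        rw [lintegral_const_mul' _ _ ENNReal.ofReal_ne_top,
          lintegral_indicator measurableSet_Ioi,
          Measure.restrict_restrict measurableSet_Ioi, Set.inter_eq_left.mpr hsub]
    _ = ∫⁻ y in Set.Ioi (1:ℝ), ∫⁻ x in Set.Ioi (1:ℝ), F (x, y) :=
        lintegral_lintegral_swap hF_meas.aemeasurable
    _ ≤ ∫⁻ y in Set.Ioi (1:ℝ), ENNReal.ofReal K * ENNReal.ofReal |f y| := by
        refine setLIntegral_mono' measurableSet_Ioi fun y hy => ?_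
        have hy1 : (1:ℝ) < y := hy
        have hy0 : (0:ℝ) < y := by linarith
        have hfun : (fun x => F (x, y)) =
            (Set.Iio y).indicator (fun x => ENNReal.ofReal (x ^ r) * g y) := by
          funext x
          by_cases hxy : x < y <;> simp [hFdef, Set.indicator, hxy]
        calc ∫⁻ x in Set.Ioi (1:ℝ), F (x, y)
            = ∫⁻ x in Set.Ioo 1 y, ENNReal.ofReal (x ^ r) * g y := by
              rw [hfun, lintegral_indicator measurableSet_Iio,
                Measure.restrict_restrict measurableSet_Iio]
              congr 1
              rw [Set.Iio_inter_Ioi]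
          _ = (∫⁻ x in Set.Ioo 1 y, ENNReal.ofReal (x ^ r)) * g y :=
              lintegral_mul_const' _ _ ENNReal.ofReal_ne_top
          _ = (∫⁻ x in Set.Ioo 1 y, ENNReal.ofReal (x ^ r)) *
                (ENNReal.ofReal (y ^ (s + t)) * ENNReal.ofReal |f y|) := by
              simp only [hgdef]
              rw [ENNReal.ofReal_mul (Real.rpow_nonneg hy0.le _)]
          _ = ((∫⁻ x in Set.Ioo 1 y, ENNReal.ofReal (x ^ r)) *
                ENNReal.ofReal (y ^ (s + t))) * ENNReal.ofReal |f y| := by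
              rw [mul_assoc]
          _ ≤ ENNReal.ofReal K * ENNReal.ofReal |f y| :=
              mul_le_mul_left (hKy y hy1) _
    _ = ENNReal.ofReal K * ∫⁻ y in Set.Ioi (1:ℝ), ENNReal.ofReal |f y| :=
        lintegral_const_mul' _ _ ENNReal.ofReal_ne_top
    _ ≤ ENNReal.ofReal K * ∫⁻ x in Set.Ioi (0 : ℝ), ENNReal.ofReal |f x| :=
        mul_le_mul_right (lintegral_mono_set (Ioi_subset_Ioi zero_le_one)) _
end

section
/- Let t ≤ 0, s + t ≤ 0, and r + s + t ≤ -1, with strict inequality in the first two whenever the third is an equality. Then there is a constant C such that for every measurable f: (0,∞) → ℝ, ∫_1^∞ x^r · sup_{ξ ≥ x} ( ξ^s ∫_ξ^∞ y^t |f(y)| dy ) dx ≤ C ∫_0^∞ |f(x)| dx. -/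
open MeasureTheory Set
open scoped ENNReal
open intervalIntegral in
private lemma aux_rpow_ii {c a b : ℝ} (h : (0:ℝ) ∉ Set.uIcc a b) :
    IntervalIntegrable (fun x : ℝ => x ^ c) MeasureTheory.volume a b :=
  intervalIntegrable_rpow (Or.inr h)
open intervalIntegral in
private lemma aux_rpow_int {c a b : ℝ} (hc : c ≠ -1) (h : (0:ℝ) ∉ Set.uIcc a b) :
    ∫ x in a..b, x ^ c = (b ^ (c+1) - a ^ (c+1)) / (c+1) :=
  integral_rpow (Or.inr ⟨hc, h⟩)

private lemma aux_int (c y : ℝ) (hc : c ≠ -1) (hy : 1 ≤ y) :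
    ∫⁻ x in Set.Ioo 1 y, ENNReal.ofReal (x ^ c) =
      ENNReal.ofReal ((y ^ (c + 1) - 1) / (c + 1)) := by
  have h0 : (0 : ℝ) ∉ uIcc (1 : ℝ) y := by
    rw [Set.mem_uIcc]
    push_neg
    constructor <;> intro h <;> linarith
  have hInt : IntegrableOn (fun x : ℝ => x ^ c) (Set.Ioo 1 y) := by
    exact (aux_rpow_ii (c := c) (a := 1) (b := y) h0).1.mono_set
      Set.Ioo_subset_Ioc_self
  rw [← ofReal_integral_eq_lintegral_ofReal hInt]
  · congr 1
    rw [← MeasureTheory.integral_Ioc_eq_integral_Ioo,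
      ← intervalIntegral.integral_of_le hy,
      aux_rpow_int hc h0, Real.one_rpow]
  · refine (ae_restrict_iff' measurableSet_Ioo).2 (Filter.Eventually.of_forall ?_)
    intro x hx
    exact Real.rpow_nonneg (by linarith [hx.1]) c

theorem stmt6 (r s t : ℝ) (ht : t ≤ 0) (hst : s + t ≤ 0)
    (hrst : r + s + t ≤ -1)
    (hstrict : r + s + t = -1 → t < 0 ∧ s + t < 0) :
    ∃ C : ℝ, 0 < C ∧ ∀ f : ℝ → ℝ, Measurable f →
      ∫⁻ x in Set.Ioi (1 : ℝ),
          ENNReal.ofReal (x ^ r) *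
            ⨆ ξ ∈ Set.Ici x,
              ENNReal.ofReal (ξ ^ s) *
                ∫⁻ y in Set.Ioi ξ, ENNReal.ofReal (y ^ t * |f y|)
        ≤ ENNReal.ofReal C * ∫⁻ x in Set.Ioi (0 : ℝ), ENNReal.ofReal |f x| := by
  set σ : ℝ := max s 0 with hσ
  set τ : ℝ := t + σ with hτdef
  set ρ : ℝ := r + s - σ with hρdef
  clear_value σ τ ρ
  have hσ0 : 0 ≤ σ := by rw [hσ]; exact le_max_right _ _
  have hτ0 : τ ≤ 0 := by
    rcases le_or_gt s 0 with h | h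
    · have hσe : σ = 0 := by rw [hσ]; exact max_eq_right h
      rw [hτdef, hσe]; linarith
    · have hσe : σ = s := by rw [hσ]; exact max_eq_left h.le
      rw [hτdef, hσe]; linarith
  have hρτ : ρ + τ ≤ -1 := by rw [hρdef, hτdef]; linarith
  -- case analysis for the constant
  have hτcase : τ < 0 ∨ (τ = 0 ∧ ρ < -1) := by
    rcases lt_or_eq_of_le hτ0 with h | h
    · exact Or.inl h
    · refine Or.inr ⟨h, ?_⟩
      rcases le_or_gt s 0 with hs | hs
      · have hσe : σ = 0 := by rw [hσ]; exact max_eq_right hs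
        have ht0 : t = 0 := by rw [hτdef, hσe] at h; linarith
        have : r + s + t < -1 := by
          rcases lt_or_eq_of_le hrst with h' | h'
          · exact h'
          · exact absurd (hstrict h').1 (by rw [ht0]; exact lt_irrefl 0)
        rw [hρdef, hσe]; linarith
      · have hσe : σ = s := by rw [hσ]; exact max_eq_left hs.le
        have hts : s + t = 0 := by rw [hτdef, hσe] at h; linarith
        have : r + s + t < -1 := by
          rcases lt_or_eq_of_le hrst with h' | h'
          · exact h'
          · exact absurd (hstrict h').2 (by rw [hts]; exact lt_irrefl 0)
        rw [hρdef, hσe]; linarith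
  -- the constant K with the inner-integral bound
  obtain ⟨K, hK, hKbound⟩ : ∃ K : ℝ, 0 < K ∧ ∀ y : ℝ, 1 ≤ y →
      ∫⁻ x in Set.Ioo 1 y, ENNReal.ofReal (x ^ ρ) ≤ ENNReal.ofReal (K * y ^ (-τ)) := by
    rcases hτcase with hτneg | ⟨hτeq, hρlt⟩
    · have hτpos : 0 < -τ := by linarith
      refine ⟨(-τ)⁻¹, by positivity, fun y hy => ?_⟩
      have step1 : ∫⁻ x in Set.Ioo 1 y, ENNReal.ofReal (x ^ ρ) ≤
          ∫⁻ x in Set.Ioo 1 y, ENNReal.ofReal (x ^ (-τ - 1)) := by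
        refine setLIntegral_mono' measurableSet_Ioo fun x hx => ?_
        exact ENNReal.ofReal_le_ofReal
          (Real.rpow_le_rpow_of_exponent_le hx.1.le (by linarith))
      refine step1.trans ?_
      rw [aux_int (-τ - 1) y (by intro h; linarith) hy]
      apply ENNReal.ofReal_le_ofReal
      have h1 : (-τ - 1) + 1 = -τ := by ring
      rw [h1, div_le_iff₀ hτpos]
      have hτne : -τ ≠ 0 := ne_of_gt hτpos
      have h2 : (-τ)⁻¹ * y ^ (-τ) * -τ = y ^ (-τ) := by
        rw [mul_comm, ← mul_assoc, mul_inv_cancel₀ hτne, one_mul]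
      rw [h2]
      linarith
    · have hρpos : 0 < -(ρ + 1) := by linarith
      refine ⟨(-(ρ + 1))⁻¹, by positivity, fun y hy => ?_⟩
      rw [aux_int ρ y (by linarith) hy]
      apply ENNReal.ofReal_le_ofReal
      have hy0 : 0 ≤ y ^ (ρ + 1) := Real.rpow_nonneg (by linarith) _
      rw [hτeq, neg_zero, Real.rpow_zero, mul_one, div_le_iff_of_neg (by linarith)]
      have hne : -(ρ + 1) ≠ 0 := ne_of_gt hρpos
      have h3 : (-(ρ + 1))⁻¹ * (ρ + 1) = -1 := by
        field_simp
        rw [div_self (by linarith : ρ + 1 ≠ 0)]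
      rw [h3]; linarith
  refine ⟨K, hK, fun f hf => ?_⟩
  set h : ℝ → ℝ≥0∞ := fun y => ENNReal.ofReal (y ^ τ * |f y|) with hh
  have hmeas : Measurable h := by
    have : Measurable fun y : ℝ => y ^ τ := by fun_prop
    exact (this.mul hf.abs).ennreal_ofReal
  -- Step A : bound the supremum
  have stepA : ∀ x : ℝ, x ∈ Set.Ioi (1 : ℝ) →
      ENNReal.ofReal (x ^ r) *
          ⨆ ξ ∈ Set.Ici x, ENNReal.ofReal (ξ ^ s) *
            ∫⁻ y in Set.Ioi ξ, ENNReal.ofReal (y ^ t * |f y|)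
        ≤ ENNReal.ofReal (x ^ ρ) * ∫⁻ y in Set.Ioi x, h y := by
    intro x hx
    rw [Set.mem_Ioi] at hx
    have hx0 : (0 : ℝ) < x := by linarith
    have key : (⨆ ξ ∈ Set.Ici x, ENNReal.ofReal (ξ ^ s) *
        ∫⁻ y in Set.Ioi ξ, ENNReal.ofReal (y ^ t * |f y|))
        ≤ ENNReal.ofReal (x ^ (s - σ)) * ∫⁻ y in Set.Ioi x, h y := by
      refine iSup₂_le fun ξ hξ => ?_
      rw [Set.mem_Ici] at hξ
      have hξ0 : (0 : ℝ) < ξ := lt_of_lt_of_le hx0 hξ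
      calc ENNReal.ofReal (ξ ^ s) * ∫⁻ y in Set.Ioi ξ, ENNReal.ofReal (y ^ t * |f y|)
          = ∫⁻ y in Set.Ioi ξ, ENNReal.ofReal (ξ ^ s) * ENNReal.ofReal (y ^ t * |f y|) :=
            (lintegral_const_mul' _ _ ENNReal.ofReal_ne_top).symm
        _ ≤ ∫⁻ y in Set.Ioi ξ, ENNReal.ofReal (x ^ (s - σ)) * h y := by
            refine setLIntegral_mono' measurableSet_Ioi fun y hy => ?_
            rw [Set.mem_Ioi] at hy
            have hy0 : (0 : ℝ) < y := lt_trans hξ0 hy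
            rw [← ENNReal.ofReal_mul (Real.rpow_nonneg hξ0.le s),
              hh, ← ENNReal.ofReal_mul (Real.rpow_nonneg hx0.le _)]
            apply ENNReal.ofReal_le_ofReal
            rw [← mul_assoc, ← mul_assoc]
            refine mul_le_mul_of_nonneg_right ?_ (abs_nonneg _)
            -- ξ^s * y^t ≤ x^(s-σ) * y^τ
            rcases le_or_gt s 0 with hs | hs
            · have hσe : σ = 0 := by rw [hσ]; exact max_eq_right hs
              rw [hσe, sub_zero, hτdef, hσe, add_zero]
              exact mul_le_mul_of_nonneg_right
                (Real.rpow_le_rpow_of_nonpos hx0 hξ hs)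
                (Real.rpow_nonneg hy0.le t)
            · have hσe : σ = s := by rw [hσ]; exact max_eq_left hs.le
              rw [hσe, sub_self, Real.rpow_zero, one_mul, hτdef, hσe]
              calc ξ ^ s * y ^ t ≤ y ^ s * y ^ t :=
                    mul_le_mul_of_nonneg_right
                      (Real.rpow_le_rpow hξ0.le hy.le hs.le)
                      (Real.rpow_nonneg hy0.le t)
                _ = y ^ (t + s) := by rw [← Real.rpow_add hy0]; ring_nf
        _ ≤ ∫⁻ y in Set.Ioi x, ENNReal.ofReal (x ^ (s - σ)) * h y :=
            lintegral_mono_set (Set.Ioi_subset_Ioi hξ)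
        _ = ENNReal.ofReal (x ^ (s - σ)) * ∫⁻ y in Set.Ioi x, h y :=
            lintegral_const_mul' _ _ ENNReal.ofReal_ne_top
    calc ENNReal.ofReal (x ^ r) * _ ≤ ENNReal.ofReal (x ^ r) *
        (ENNReal.ofReal (x ^ (s - σ)) * ∫⁻ y in Set.Ioi x, h y) :=
          mul_le_mul_right key _
      _ = ENNReal.ofReal (x ^ ρ) * ∫⁻ y in Set.Ioi x, h y := by
          rw [← mul_assoc, ← ENNReal.ofReal_mul (Real.rpow_nonneg hx0.le r),
            ← Real.rpow_add hx0, hρdef]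
          ring_nf
  -- Step B : apply step A under the integral
  have hmono : Measurable fun x : ℝ => ∫⁻ y in Set.Ioi x, h y := by
    have : Antitone fun x : ℝ => ∫⁻ y in Set.Ioi x, h y := fun a b hab =>
      lintegral_mono_set (Set.Ioi_subset_Ioi hab)
    exact this.measurable
  have stepB : ∫⁻ x in Set.Ioi (1 : ℝ),
      ENNReal.ofReal (x ^ r) *
        ⨆ ξ ∈ Set.Ici x, ENNReal.ofReal (ξ ^ s) *
          ∫⁻ y in Set.Ioi ξ, ENNReal.ofReal (y ^ t * |f y|)
      ≤ ∫⁻ x in Set.Ioi (1 : ℝ), ENNReal.ofReal (x ^ ρ) * ∫⁻ y in Set.Ioi x, h y :=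
    setLIntegral_mono' measurableSet_Ioi stepA
  refine stepB.trans ?_
  -- Step C : Tonelli
  have stepC : ∫⁻ x in Set.Ioi (1 : ℝ), ENNReal.ofReal (x ^ ρ) * ∫⁻ y in Set.Ioi x, h y
      = ∫⁻ y, (∫⁻ x in Set.Ioo 1 y, ENNReal.ofReal (x ^ ρ)) * h y := by
    have e1 : ∀ x : ℝ, ENNReal.ofReal (x ^ ρ) * ∫⁻ y in Set.Ioi x, h y
        = ∫⁻ y, ENNReal.ofReal (x ^ ρ) * (Set.Ioi x).indicator h y := by
      intro x
      rw [← lintegral_indicator measurableSet_Ioi h,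
        lintegral_const_mul' _ _ ENNReal.ofReal_ne_top]
    rw [lintegral_congr e1]
    have hFmeas : AEMeasurable
        (Function.uncurry fun x y : ℝ =>
          ENNReal.ofReal (x ^ ρ) * (Set.Ioi x).indicator h y)
        ((volume.restrict (Set.Ioi (1 : ℝ))).prod volume) := by
      refine Measurable.aemeasurable ?_
      have : (Function.uncurry fun x y : ℝ =>
          ENNReal.ofReal (x ^ ρ) * (Set.Ioi x).indicator h y) =
          fun p : ℝ × ℝ => ENNReal.ofReal (p.1 ^ ρ) *
            ({q : ℝ × ℝ | q.1 < q.2}.indicator (fun q => h q.2) p) := by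
        funext p
        simp only [Function.uncurry, Set.indicator_apply, Set.mem_Ioi, Set.mem_setOf_eq]
      rw [this]
      have h1 : Measurable fun p : ℝ × ℝ => p.1 ^ ρ := by fun_prop
      exact (h1.ennreal_ofReal).mul
        ((hmeas.comp measurable_snd).indicator
          (measurableSet_lt measurable_fst measurable_snd))
    rw [lintegral_lintegral_swap hFmeas]
    refine lintegral_congr fun y => ?_
    have e2 : ∀ x : ℝ, ENNReal.ofReal (x ^ ρ) * (Set.Ioi x).indicator h y
        = (Set.Iio y).indicator (fun x => ENNReal.ofReal (x ^ ρ) * h y) x := by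
      intro x
      by_cases hxy : x < y
      · simp [Set.indicator_apply, Set.mem_Ioi, Set.mem_Iio, hxy]
      · simp [Set.indicator_apply, Set.mem_Ioi, Set.mem_Iio, hxy]
    calc ∫⁻ x in Set.Ioi (1 : ℝ), ENNReal.ofReal (x ^ ρ) * (Set.Ioi x).indicator h y
        = ∫⁻ x in Set.Ioi (1 : ℝ),
            (Set.Iio y).indicator (fun x => ENNReal.ofReal (x ^ ρ) * h y) x :=
          lintegral_congr fun x => e2 x
      _ = ∫⁻ x in Set.Iio y ∩ Set.Ioi 1, ENNReal.ofReal (x ^ ρ) * h y := by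
          rw [lintegral_indicator measurableSet_Iio,
            Measure.restrict_restrict measurableSet_Iio]
      _ = ∫⁻ x in Set.Ioo 1 y, ENNReal.ofReal (x ^ ρ) * h y := by
          rw [Set.inter_comm, Set.Ioi_inter_Iio]
      _ = (∫⁻ x in Set.Ioo 1 y, ENNReal.ofReal (x ^ ρ)) * h y :=
          lintegral_mul_const' _ _ ENNReal.ofReal_ne_top
  rw [stepC]
  -- Step D : final bound
  have stepD : ∀ y : ℝ, (∫⁻ x in Set.Ioo 1 y, ENNReal.ofReal (x ^ ρ)) * h y
      ≤ (Set.Ioi (0 : ℝ)).indicator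
          (fun y => ENNReal.ofReal K * ENNReal.ofReal |f y|) y := by
    intro y
    rcases le_or_gt y 1 with hy | hy
    · rw [Set.Ioo_eq_empty (by intro h'; exact absurd (lt_of_lt_of_le h' hy) (lt_irrefl 1))]
      simp
    · have hy0 : (0 : ℝ) < y := by linarith
      rw [Set.indicator_of_mem (Set.mem_Ioi.2 hy0)]
      calc (∫⁻ x in Set.Ioo 1 y, ENNReal.ofReal (x ^ ρ)) * h y
          ≤ ENNReal.ofReal (K * y ^ (-τ)) * ENNReal.ofReal (y ^ τ * |f y|) :=
            mul_le_mul' (hKbound y hy.le) le_rfl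
        _ = ENNReal.ofReal (K * (y ^ (-τ) * y ^ τ) * |f y|) := by
            rw [← ENNReal.ofReal_mul (by positivity)]
            ring_nf
        _ = ENNReal.ofReal K * ENNReal.ofReal |f y| := by
            rw [← Real.rpow_add hy0, neg_add_cancel, Real.rpow_zero, mul_one,
              ENNReal.ofReal_mul hK.le]
  calc ∫⁻ y, (∫⁻ x in Set.Ioo 1 y, ENNReal.ofReal (x ^ ρ)) * h y
      ≤ ∫⁻ y, (Set.Ioi (0 : ℝ)).indicator
          (fun y => ENNReal.ofReal K * ENNReal.ofReal |f y|) y := lintegral_mono stepD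
    _ = ∫⁻ y in Set.Ioi (0 : ℝ), ENNReal.ofReal K * ENNReal.ofReal |f y| :=
        lintegral_indicator measurableSet_Ioi _
    _ = ENNReal.ofReal K * ∫⁻ x in Set.Ioi (0 : ℝ), ENNReal.ofReal |f x| :=
        lintegral_const_mul' _ _ ENNReal.ofReal_ne_top
end

section
/- Let r < -1, r + s < -1, and r + s + t ≤ -1. Then there is a constant C such that for every measurable f: (0,∞) → ℝ, ∫_1^∞ x^r · sup_{1 ≤ ξ ≤ x} ( ξ^s ∫_1^ξ y^t |f(y)| dy ) dx ≤ C ∫_0^∞ |f(x)| dx. -/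
open MeasureTheory Set Function
open scoped ENNReal

lemma key8 (ρ τ : ℝ) (hρ : ρ < -1) (hρτ : ρ + τ ≤ -1) (f : ℝ → ℝ) (hf : Measurable f) :
    ∫⁻ x in Set.Ioi (1 : ℝ),
        ENNReal.ofReal (x ^ ρ) * ∫⁻ y in Set.Ioc (1 : ℝ) x, ENNReal.ofReal (y ^ τ * |f y|)
      ≤ ENNReal.ofReal (1 / (-ρ - 1)) * ∫⁻ x in Set.Ioi (0 : ℝ), ENNReal.ofReal |f x| := by
  set G : ℝ → ℝ≥0∞ := fun y => ENNReal.ofReal (y ^ τ * |f y|) with hG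
  have hGm : Measurable G :=
    ((measurable_id'.pow measurable_const).mul hf.abs).ennreal_ofReal
  set F : ℝ → ℝ → ℝ≥0∞ := fun x y =>
    (Set.Ioc (1 : ℝ) x).indicator (fun y => ENNReal.ofReal (x ^ ρ) * G y) y with hF
  have hFm : AEMeasurable (uncurry F) ((volume.restrict (Set.Ioi (1 : ℝ))).prod volume) := by
    have huf : uncurry F = ({p : ℝ × ℝ | 1 < p.2 ∧ p.2 ≤ p.1}).indicator
        (fun p => ENNReal.ofReal (p.1 ^ ρ) * G p.2) := by
      funext p
      simp only [uncurry, hF, Set.indicator_apply, Set.mem_Ioc, Set.mem_setOf_eq]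
    rw [huf]
    refine (Measurable.indicator ?_ ?_).aemeasurable
    · exact ((measurable_fst.pow measurable_const).ennreal_ofReal).mul (hGm.comp measurable_snd)
    · exact (measurableSet_lt measurable_const measurable_snd).inter
        (measurableSet_le measurable_snd measurable_fst)
  calc
    ∫⁻ x in Set.Ioi (1 : ℝ), ENNReal.ofReal (x ^ ρ) * ∫⁻ y in Set.Ioc (1 : ℝ) x, G y
        = ∫⁻ x in Set.Ioi (1 : ℝ), ∫⁻ y, F x y := by
          refine lintegral_congr fun x => ?_
          rw [hF]
          rw [lintegral_indicator measurableSet_Ioc, lintegral_const_mul _ hGm]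
    _ = ∫⁻ y, ∫⁻ x in Set.Ioi (1 : ℝ), F x y := lintegral_lintegral_swap hFm
    _ ≤ ∫⁻ y, (Set.Ioi (1 : ℝ)).indicator
          (fun y => ENNReal.ofReal (1 / (-ρ - 1)) * ENNReal.ofReal |f y|) y := by
          refine lintegral_mono fun y => ?_
          by_cases hy : (1 : ℝ) < y
          · have hy0 : (0 : ℝ) < y := lt_trans one_pos hy
            have hFy : ∀ x, F x y
                = (Set.Ici y).indicator (fun x => ENNReal.ofReal (x ^ ρ)) x * G y := by
              intro x
              simp only [hF, Set.indicator_apply, Set.mem_Ioc, Set.mem_Ici, hy, true_and,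
                ite_mul, zero_mul]
            have h1 : ∫⁻ x in Set.Ioi (1 : ℝ), F x y
                = (∫⁻ x in Set.Ici y, ENNReal.ofReal (x ^ ρ)) * G y := by
              simp_rw [hFy]
              rw [lintegral_mul_const _ ((measurable_id'.pow
                measurable_const).ennreal_ofReal.indicator measurableSet_Ici)]
              congr 1
              rw [lintegral_indicator measurableSet_Ici, Measure.restrict_restrict
                measurableSet_Ici]
              have hie : Set.Ici y ∩ Set.Ioi (1:ℝ) = Set.Ici y :=
                Set.inter_eq_left.mpr fun z hz => lt_of_lt_of_le hy (Set.mem_Ici.mp hz)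
              rw [hie]
            have h2 : ∫⁻ x in Set.Ici y, ENNReal.ofReal (x ^ ρ)
                = ENNReal.ofReal (-y ^ (ρ + 1) / (ρ + 1)) := by
              rw [setLIntegral_congr (Ioi_ae_eq_Ici (a := y)).symm]
              rw [← ofReal_integral_eq_lintegral_ofReal
                (integrableOn_Ioi_rpow_of_lt hρ hy0)
                ((ae_restrict_iff' measurableSet_Ioi).2 (Filter.Eventually.of_forall
                  fun x hx => Real.rpow_nonneg (le_of_lt (lt_trans hy0 hx)) ρ))]
              rw [integral_Ioi_rpow_of_lt hρ hy0]
            have hρ0 : (0 : ℝ) < -ρ - 1 := by linarith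
            have hc0 : (0 : ℝ) ≤ -y ^ (ρ + 1) / (ρ + 1) := by
              have : (0 : ℝ) ≤ y ^ (ρ + 1) := Real.rpow_nonneg hy0.le _
              have hρ1 : ρ + 1 < 0 := by linarith
              rw [div_nonneg_iff]
              right
              constructor <;> [linarith; linarith]
            rw [Set.indicator_of_mem (Set.mem_Ioi.2 hy), h1, h2, hG]
            rw [← ENNReal.ofReal_mul hc0, ← ENNReal.ofReal_mul (by positivity)]
            refine ENNReal.ofReal_le_ofReal ?_
            have hpow : y ^ (ρ + 1) * y ^ τ = y ^ (ρ + 1 + τ) := (Real.rpow_add hy0 _ _).symm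
            have hle1 : y ^ (ρ + 1 + τ) ≤ 1 := by
              have := Real.rpow_le_rpow_of_exponent_le hy.le
                (show ρ + 1 + τ ≤ 0 by linarith)
              simpa using this
            have harith : -y ^ (ρ + 1) / (ρ + 1) * (y ^ τ * |f y|)
                = 1 / (-ρ - 1) * (y ^ (ρ + 1 + τ) * |f y|) := by
              rw [← hpow]
              have : ρ + 1 ≠ 0 := by linarith
              field_simp
              ring
            rw [harith]
            refine mul_le_mul_of_nonneg_left ?_ (by positivity)
            calc y ^ (ρ + 1 + τ) * |f y| ≤ 1 * |f y| :=
                  mul_le_mul_of_nonneg_right hle1 (abs_nonneg _)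
              _ = |f y| := one_mul _
          · have hz : ∀ x, F x y = 0 := by
              intro x
              rw [hF]
              refine Set.indicator_of_notMem ?_ _
              simp only [Set.mem_Ioc, not_and]
              exact fun h => absurd h hy
            simp only [hz, lintegral_zero]
            exact zero_le
    _ = ENNReal.ofReal (1 / (-ρ - 1)) * ∫⁻ y in Set.Ioi (1 : ℝ), ENNReal.ofReal |f y| := by
          rw [lintegral_indicator measurableSet_Ioi,
            lintegral_const_mul _ hf.abs.ennreal_ofReal]
    _ ≤ ENNReal.ofReal (1 / (-ρ - 1)) * ∫⁻ x in Set.Ioi (0 : ℝ), ENNReal.ofReal |f x| := by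
          gcongr
          exact zero_le_one

theorem stmt8 (r s t : ℝ) (hr : r < -1) (hrs : r + s < -1)
    (hrst : r + s + t ≤ -1) :
    ∃ C : ℝ, 0 < C ∧ ∀ f : ℝ → ℝ, Measurable f →
      ∫⁻ x in Set.Ioi (1 : ℝ),
          ENNReal.ofReal (x ^ r) *
            ⨆ ξ ∈ Set.Icc (1 : ℝ) x,
              ENNReal.ofReal (ξ ^ s) *
                ∫⁻ y in Set.Ioc (1 : ℝ) ξ, ENNReal.ofReal (y ^ t * |f y|)
        ≤ ENNReal.ofReal C * ∫⁻ x in Set.Ioi (0 : ℝ), ENNReal.ofReal |f x| := by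
  rcases le_or_gt s 0 with hs | hs
  · refine ⟨1 / (-r - 1), one_div_pos.mpr (by linarith), fun f hf => ?_⟩
    refine le_trans ?_ (key8 r (s + t) hr (by linarith) f hf)
    refine lintegral_mono fun x => ?_
    refine mul_le_mul_right ?_ _
    refine iSup₂_le fun ξ hξ => ?_
    calc
      ENNReal.ofReal (ξ ^ s) * ∫⁻ y in Set.Ioc (1 : ℝ) ξ, ENNReal.ofReal (y ^ t * |f y|)
          = ∫⁻ y in Set.Ioc (1 : ℝ) ξ,
              ENNReal.ofReal (ξ ^ s) * ENNReal.ofReal (y ^ t * |f y|) :=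
            (lintegral_const_mul _ ((measurable_id'.pow measurable_const).mul
              hf.abs).ennreal_ofReal).symm
      _ ≤ ∫⁻ y in Set.Ioc (1 : ℝ) ξ, ENNReal.ofReal (y ^ (s + t) * |f y|) := by
            refine setLIntegral_mono' measurableSet_Ioc fun y hy => ?_
            have hy0 : (0 : ℝ) < y := lt_trans one_pos hy.1
            rw [← ENNReal.ofReal_mul (Real.rpow_nonneg
              (le_trans zero_le_one hξ.1) s)]
            refine ENNReal.ofReal_le_ofReal ?_
            have h1 : ξ ^ s ≤ y ^ s := Real.rpow_le_rpow_of_nonpos hy0 hy.2 hs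
            have h2 : y ^ s * y ^ t = y ^ (s + t) := (Real.rpow_add hy0 _ _).symm
            calc ξ ^ s * (y ^ t * |f y|) ≤ y ^ s * (y ^ t * |f y|) :=
                  mul_le_mul_of_nonneg_right h1 (by positivity)
              _ = y ^ (s + t) * |f y| := by rw [← mul_assoc, h2]
      _ ≤ ∫⁻ y in Set.Ioc (1 : ℝ) x, ENNReal.ofReal (y ^ (s + t) * |f y|) :=
            lintegral_mono_set (Set.Ioc_subset_Ioc_right hξ.2)
  · refine ⟨1 / (-(r + s) - 1), one_div_pos.mpr (by linarith), fun f hf => ?_⟩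
    refine le_trans ?_ (key8 (r + s) t hrs (by linarith) f hf)
    refine setLIntegral_mono' measurableSet_Ioi fun x hx => ?_
    have hx1 : (1 : ℝ) < x := hx
    have hx0 : (0 : ℝ) < x := lt_trans one_pos hx1
    have hxrs : x ^ (r + s) = x ^ r * x ^ s := Real.rpow_add hx0 r s
    rw [hxrs, ENNReal.ofReal_mul (Real.rpow_nonneg hx0.le r), mul_assoc]
    refine mul_le_mul_right ?_ _
    refine iSup₂_le fun ξ hξ => ?_
    refine mul_le_mul' (ENNReal.ofReal_le_ofReal
      (Real.rpow_le_rpow (le_trans zero_le_one hξ.1) hξ.2 hs.le)) ?_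
    exact lintegral_mono_set (Set.Ioc_subset_Ioc_right hξ.2)
end

section
/- Let ν > -1, 1 < p < ∞, and let T be a linear operator defined on L¹((0,1), x^{2ν+1} dx) such that ‖Tf‖_{L^∞} ≤ A ‖f‖_{L¹(dμ_ν)} and ‖Tf‖_{L^∞} ≤ B ‖f‖_{L^∞} for all f, where dμ_ν(x) = x^{2ν+1} dx. Then there is a constant C (depending only on p and ν) such that ‖Tf‖_{L^∞((0,1), dμ_ν)} ≤ C A^{1/p} B^{1/p'} ‖f‖_{L^{p,∞}((0,1), dμ_ν)}, where 1/p + 1/p' = 1. -/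
open MeasureTheory Set ENNReal

/-- The measure `dμ_ν(x) = x^{2ν+1} dx` on `(0,1)`. -/
noncomputable def muNu (ν : ℝ) : Measure ℝ :=
  ((volume : Measure ℝ).restrict (Set.Ioo 0 1)).withDensity
    (fun x => ENNReal.ofReal (x ^ (2 * ν + 1)))

lemma ptwise_aux (φ : ℝ → ℝ≥0∞) (L : ℝ≥0∞) (hL0 : L ≠ 0) (hLt : L ≠ ⊤) (x : ℝ) :
    φ x ≤ {y | 0 < φ y}.indicator (fun _ => L) x
      + 2 * ∑' k : ℕ, {y | 2 ^ k * L < φ y}.indicator (fun _ => (2 : ℝ≥0∞) ^ k * L) x := by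
  rcases eq_or_ne (φ x) 0 with h0 | h0
  · simp [h0]
  have hpos : 0 < φ x := pos_iff_ne_zero.mpr h0
  have hind : {y | 0 < φ y}.indicator (fun _ => L) x = L := Set.indicator_of_mem (show x ∈ {y | 0 < φ y} from hpos) (fun _ => L)
  rw [hind]
  by_cases hle : φ x ≤ L
  · exact hle.trans le_self_add
  push_neg at hle
  rcases eq_or_ne (φ x) ⊤ with htop | htop
  · have hsum : ∑' k : ℕ, {y | 2 ^ k * L < φ y}.indicator (fun _ => (2 : ℝ≥0∞) ^ k * L) x = ⊤ := by
      have hterm : ∀ k : ℕ,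
          {y | 2 ^ k * L < φ y}.indicator (fun _ => (2 : ℝ≥0∞) ^ k * L) x = 2 ^ k * L := by
        intro k
        refine Set.indicator_of_mem (show x ∈ {y | 2 ^ k * L < φ y} from ?_) _
        show 2 ^ k * L < φ x
        rw [htop]
        exact lt_top_iff_ne_top.mpr (ENNReal.mul_ne_top (pow_ne_top (by norm_num)) hLt)
      rw [tsum_congr hterm, ENNReal.tsum_mul_right, ENNReal.tsum_geometric]
      have : (1 - 2 : ℝ≥0∞) = 0 := by
        simp [tsub_eq_zero_iff_le]
      rw [this]
      simp [ENNReal.top_mul hL0]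
    rw [hsum]
    simp
  -- finite case
  have hLreal : 0 < L.toReal := ENNReal.toReal_pos hL0 hLt
  have hLt' : L.toReal < (φ x).toReal := (ENNReal.toReal_lt_toReal hLt htop).mpr hle
  have hexists : ∃ n : ℕ, (φ x).toReal ≤ 2 ^ (n + 1) * L.toReal := by
    obtain ⟨n, hn⟩ := pow_unbounded_of_one_lt ((φ x).toReal / L.toReal) (one_lt_two (α := ℝ))
    refine ⟨n, ?_⟩
    have h1 : (φ x).toReal < 2 ^ n * L.toReal := by
      rw [div_lt_iff₀ hLreal] at hn; linarith
    have h2 : (2 : ℝ) ^ n ≤ 2 ^ (n + 1) := by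
      apply pow_le_pow_right₀ (by norm_num) (Nat.le_succ n)
    nlinarith
  set n₀ := Nat.find hexists with hn₀
  have hspec : (φ x).toReal ≤ 2 ^ (n₀ + 1) * L.toReal := Nat.find_spec hexists
  have hlow : 2 ^ n₀ * L.toReal < (φ x).toReal := by
    rcases Nat.eq_zero_or_pos n₀ with h | h
    · rw [h]; simpa using hLt'
    · have hmin := Nat.find_min hexists (Nat.sub_lt h Nat.one_pos)
      push_neg at hmin
      have : n₀ - 1 + 1 = n₀ := Nat.succ_pred_eq_of_pos h
      rwa [this] at hmin
  have hfin : ∀ k : ℕ, (2 : ℝ≥0∞) ^ k * L ≠ ⊤ :=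
    fun k => ENNReal.mul_ne_top (pow_ne_top (by norm_num)) hLt
  have htr : ∀ k : ℕ, ((2 : ℝ≥0∞) ^ k * L).toReal = 2 ^ k * L.toReal := by
    intro k
    rw [ENNReal.toReal_mul, ENNReal.toReal_pow]
    norm_num
  have h1 : 2 ^ n₀ * L < φ x := by
    rw [← ENNReal.toReal_lt_toReal (hfin n₀) htop, htr]
    exact hlow
  have h2 : φ x ≤ 2 ^ (n₀ + 1) * L := by
    rw [← ENNReal.toReal_le_toReal htop (hfin (n₀ + 1)), htr]
    exact hspec
  have hterm : {y | 2 ^ n₀ * L < φ y}.indicator (fun _ => (2 : ℝ≥0∞) ^ n₀ * L) x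
      = 2 ^ n₀ * L := Set.indicator_of_mem (show x ∈ {y | 2 ^ n₀ * L < φ y} from h1) (fun _ => (2 : ℝ≥0∞) ^ n₀ * L)
  calc φ x ≤ 2 ^ (n₀ + 1) * L := h2
    _ = 2 * (2 ^ n₀ * L) := by rw [pow_succ]; ring
    _ ≤ 2 * ∑' k : ℕ, {y | 2 ^ k * L < φ y}.indicator (fun _ => (2 : ℝ≥0∞) ^ k * L) x := by
        gcongr
        rw [← hterm]
        exact ENNReal.le_tsum n₀
    _ ≤ _ := le_add_self

lemma key_integral (μ : Measure ℝ) (f : ℝ → ℝ) (p : ℝ) (hp1 : 1 < p) (M : ℝ≥0∞)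
    (lam : ℝ) (hlam : 0 < lam)
    (hptwise : ∀ (φ : ℝ → ℝ≥0∞) (L : ℝ≥0∞), L ≠ 0 → L ≠ ⊤ → ∀ x : ℝ,
      φ x ≤ {y | 0 < φ y}.indicator (fun _ => L) x
        + 2 * ∑' k : ℕ, {y | 2 ^ k * L < φ y}.indicator (fun _ => (2 : ℝ≥0∞) ^ k * L) x)
    (hweak : ∀ l : ℝ, 0 < l →
      ENNReal.ofReal l * μ {x | l < |f x|} ≤ M ^ p * ENNReal.ofReal l ^ (1 - p)) :
    ∫⁻ x, ‖({x | lam < |f x|}).indicator f x‖₊ ∂μ ≤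
      M ^ p * ENNReal.ofReal lam ^ (1 - p) * (1 + 2 * (1 - (2 : ℝ≥0∞) ^ (1 - p))⁻¹) := by
  set g := ({x | lam < |f x|}).indicator f with hg
  obtain ⟨φ, hφm, hφle, hφeq⟩ :=
    exists_measurable_le_lintegral_eq μ (fun x => (‖g x‖₊ : ℝ≥0∞))
  rw [hφeq]
  set L := ENNReal.ofReal lam with hL
  have hL0 : L ≠ 0 := by simp [hL, ENNReal.ofReal_eq_zero, not_le, hlam]
  have hLtop : L ≠ ⊤ := ENNReal.ofReal_ne_top
  -- subset facts
  have hsub0 : {y | 0 < φ y} ⊆ {x | lam < |f x|} := by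
    intro y hy
    by_contra hmem
    have : g y = 0 := Set.indicator_of_notMem hmem f
    have h2 : φ y ≤ 0 := by simpa [this] using hφle y
    exact absurd (le_antisymm h2 zero_le) (ne_of_gt hy)
  have hsubk : ∀ k : ℕ, {y | 2 ^ k * L < φ y} ⊆ {x | 2 ^ k * lam < |f x|} := by
    intro k y hy
    have h1 : (2 : ℝ≥0∞) ^ k * L < (‖g y‖₊ : ℝ≥0∞) := lt_of_lt_of_le hy (hφle y)
    have h2 : (‖g y‖₊ : ℝ≥0∞) = ENNReal.ofReal |g y| := Real.enorm_eq_ofReal_abs (g y)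
    have h3 : (2 : ℝ≥0∞) ^ k * L = ENNReal.ofReal (2 ^ k * lam) := by
      rw [ENNReal.ofReal_mul (by positivity), ENNReal.ofReal_pow (by norm_num)]
      norm_num
      rfl
    have h4 : |g y| ≤ |f y| := by
      rw [hg]
      rcases Set.indicator_eq_zero_or_self {x | lam < |f x|} f y with h | h <;> rw [h] <;> simp
    have h5 : (2 : ℝ) ^ k * lam < |g y| := by
      rw [h2, h3] at h1
      exact (ENNReal.ofReal_lt_ofReal_iff_of_nonneg (by positivity)).mp h1
    exact lt_of_lt_of_le h5 h4
  -- measurability of level sets of φ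
  have hms0 : MeasurableSet {y | 0 < φ y} := measurableSet_lt measurable_const hφm
  have hmsk : ∀ k : ℕ, MeasurableSet {y | 2 ^ k * L < φ y} :=
    fun k => measurableSet_lt measurable_const hφm
  have hstep : ∫⁻ x, φ x ∂μ ≤
      L * μ {y | 0 < φ y} + 2 * ∑' k : ℕ, (2 : ℝ≥0∞) ^ k * L * μ {y | 2 ^ k * L < φ y} := by
    calc ∫⁻ x, φ x ∂μ
        ≤ ∫⁻ x, ({y | 0 < φ y}.indicator (fun _ => L) x
            + 2 * ∑' k : ℕ, {y | 2 ^ k * L < φ y}.indicator (fun _ => (2 : ℝ≥0∞) ^ k * L) x) ∂μ :=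
          lintegral_mono (hptwise φ L hL0 hLtop)
      _ = ∫⁻ x, {y | 0 < φ y}.indicator (fun _ => L) x ∂μ
            + ∫⁻ x, 2 * ∑' k : ℕ, {y | 2 ^ k * L < φ y}.indicator
                (fun _ => (2 : ℝ≥0∞) ^ k * L) x ∂μ := by
          apply lintegral_add_left
          exact (measurable_const.indicator hms0)
      _ ≤ L * μ {y | 0 < φ y} + 2 * ∑' k : ℕ, (2 : ℝ≥0∞) ^ k * L * μ {y | 2 ^ k * L < φ y} := by
          gcongr
          · exact le_of_eq (lintegral_indicator_const hms0 L)
          · rw [lintegral_const_mul 2 (by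
              exact Measurable.ennreal_tsum fun k => measurable_const.indicator (hmsk k))]
            gcongr
            rw [lintegral_tsum (fun k => (measurable_const.indicator (hmsk k)).aemeasurable)]
            apply le_of_eq
            exact tsum_congr fun k => lintegral_indicator_const (hmsk k) _
  refine hstep.trans ?_
  have hbound0 : L * μ {y | 0 < φ y} ≤ M ^ p * L ^ (1 - p) := by
    refine le_trans ?_ (hweak lam hlam)
    exact mul_le_mul_right (measure_mono hsub0) L
  have hboundk : ∀ k : ℕ, (2 : ℝ≥0∞) ^ k * L * μ {y | 2 ^ k * L < φ y} ≤
      M ^ p * L ^ (1 - p) * ((2 : ℝ≥0∞) ^ (1 - p)) ^ k := by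
    intro k
    have h3 : (2 : ℝ≥0∞) ^ k * L = ENNReal.ofReal (2 ^ k * lam) := by
      rw [ENNReal.ofReal_mul (by positivity), ENNReal.ofReal_pow (by norm_num)]
      norm_num
      rfl
    have h5 : (2 : ℝ≥0∞) ^ k * L * μ {y | 2 ^ k * L < φ y} ≤
        M ^ p * ((2 : ℝ≥0∞) ^ k * L) ^ (1 - p) := by
      refine le_trans (mul_le_mul_right (measure_mono (hsubk k)) _) ?_
      rw [h3]
      exact hweak _ (by positivity)
    refine h5.trans (le_of_eq ?_)
    rw [ENNReal.mul_rpow_of_ne_top (by exact pow_ne_top (by norm_num)) hLtop]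
    rw [← ENNReal.rpow_natCast (2 : ℝ≥0∞) k, ← ENNReal.rpow_mul,
      ← ENNReal.rpow_natCast ((2 : ℝ≥0∞) ^ (1 - p)) k, ← ENNReal.rpow_mul]
    ring_nf
  calc L * μ {y | 0 < φ y} + 2 * ∑' k : ℕ, (2 : ℝ≥0∞) ^ k * L * μ {y | 2 ^ k * L < φ y}
      ≤ M ^ p * L ^ (1 - p) + 2 * ∑' k : ℕ, M ^ p * L ^ (1 - p) * ((2 : ℝ≥0∞) ^ (1 - p)) ^ k :=
        add_le_add hbound0 (mul_le_mul_right (ENNReal.tsum_le_tsum hboundk) 2)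
    _ = M ^ p * L ^ (1 - p) * (1 + 2 * (1 - (2 : ℝ≥0∞) ^ (1 - p))⁻¹) := by
        rw [ENNReal.tsum_mul_left, ENNReal.tsum_geometric]
        ring

section helpers

lemma real_core {p A B m : ℝ} (hp1 : 1 < p) (hA : 0 < A) (hB : 0 < B) (hm : 0 < m) :
    B * ((A / B) ^ (1 / p) * m) = A ^ (1 / p) * B ^ (1 - 1 / p) * m ∧
    A * (m ^ p * ((A / B) ^ (1 / p) * m) ^ (1 - p)) = A ^ (1 / p) * B ^ (1 - 1 / p) * m := by
  have hp0 : p ≠ 0 := by linarith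
  have hAB : (0 : ℝ) < A / B := div_pos hA hB
  have hABr : (0 : ℝ) < (A / B) ^ (1 / p) := Real.rpow_pos_of_pos hAB _
  have hb0 : B ^ (1 / p) ≠ 0 := ne_of_gt (Real.rpow_pos_of_pos hB _)
  have hab : (A / B) ^ (1 / p) = A ^ (1 / p) / B ^ (1 / p) := Real.div_rpow hA.le hB.le _
  have h2 : B * ((A / B) ^ (1 / p) * m) = A ^ (1 / p) * B ^ (1 - 1 / p) * m := by
    rw [hab, Real.rpow_sub hB, Real.rpow_one]
    field_simp
  refine ⟨h2, ?_⟩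
  have hmul : ((A / B) ^ (1 / p) * m) ^ (1 - p)
      = ((A / B) ^ (1 / p)) ^ (1 - p) * m ^ (1 - p) := Real.mul_rpow hABr.le hm.le
  have hq : ((A / B) ^ (1 / p)) ^ (1 - p)
      = (A / B) ^ (1 / p) / (((A / B) ^ (1 / p)) ^ p) := by
    rw [Real.rpow_sub hABr, Real.rpow_one]
  have hABp : ((A / B) ^ (1 / p)) ^ p = A / B := by
    rw [← Real.rpow_mul hAB.le, one_div, inv_mul_cancel₀ hp0, Real.rpow_one]
  have hm2 : m ^ p * m ^ (1 - p) = m := by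
    rw [← Real.rpow_add hm]
    norm_num
  calc A * (m ^ p * ((A / B) ^ (1 / p) * m) ^ (1 - p))
      = (A * ((A / B) ^ (1 / p) / (A / B))) * (m ^ p * m ^ (1 - p)) := by
        rw [hmul, hq, hABp]; ring
    _ = (B * (A / B) ^ (1 / p)) * m := by
        rw [hm2]
        congr 1
        field_simp
    _ = B * ((A / B) ^ (1 / p) * m) := by ring
    _ = A ^ (1 / p) * B ^ (1 - 1 / p) * m := h2

end helpers

theorem stmt9 (ν p : ℝ) (hν : -1 < ν) (hp1 : 1 < p) :
    ∃ C : ℝ, 0 < C ∧ ∀ (A B : ℝ), 0 ≤ A → 0 ≤ B →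
      ∀ T : (ℝ → ℝ) → ℝ → ℝ,
        (∀ f g : ℝ → ℝ, T (f + g) = T f + T g) →
        (∀ (c : ℝ) (f : ℝ → ℝ), T (c • f) = c • T f) →
        (∀ f : ℝ → ℝ, eLpNorm (T f) ⊤ (muNu ν) ≤
            ENNReal.ofReal A * eLpNorm f 1 (muNu ν)) →
        (∀ f : ℝ → ℝ, eLpNorm (T f) ⊤ (muNu ν) ≤
            ENNReal.ofReal B * eLpNorm f ⊤ (muNu ν)) →
        ∀ f : ℝ → ℝ,
          eLpNorm (T f) ⊤ (muNu ν) ≤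
            ENNReal.ofReal (C * A ^ (1 / p) * B ^ (1 - 1 / p)) *
              ⨆ (l : ℝ) (_ : 0 < l),
                ENNReal.ofReal l * (muNu ν {x | l < |f x|}) ^ (1 / p) := by
  have hp0 : (0 : ℝ) < p := by linarith
  have hp0' : p ≠ 0 := ne_of_gt hp0
  have hr2 : (0 : ℝ) < (2 : ℝ) ^ (1 - p) := Real.rpow_pos_of_pos two_pos _
  have hr2' : (2 : ℝ) ^ (1 - p) < 1 :=
    Real.rpow_lt_one_of_one_lt_of_neg one_lt_two (by linarith)
  set Kr : ℝ := 1 + 2 * (1 - (2 : ℝ) ^ (1 - p))⁻¹ with hKr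
  have hinv : 0 < (1 - (2 : ℝ) ^ (1 - p))⁻¹ := inv_pos.mpr (by linarith)
  have hKrpos : 0 < Kr := by rw [hKr]; linarith
  refine ⟨Kr + 1, by linarith, ?_⟩
  intro A B hA hB T hadd hsmul hTA hTB f
  set μ := muNu ν with hμ
  set M := ⨆ (l : ℝ) (_ : 0 < l), ENNReal.ofReal l * (μ {x | l < |f x|}) ^ (1 / p) with hMdef
  -- trivial case A = 0
  rcases eq_or_lt_of_le hA with hA0 | hA0
  · have h0 : eLpNorm (T f) ⊤ μ = 0 :=
      le_antisymm (by simpa [← hA0] using hTA f) zero_le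
    rw [h0]; exact zero_le
  rcases eq_or_lt_of_le hB with hB0 | hB0
  · have h0 : eLpNorm (T f) ⊤ μ = 0 :=
      le_antisymm (by simpa [← hB0] using hTB f) zero_le
    rw [h0]; exact zero_le
  have hsup : ∀ l : ℝ, 0 < l →
      ENNReal.ofReal l * (μ {x | l < |f x|}) ^ (1 / p) ≤ M := by
    intro l hl
    rw [hMdef]
    exact le_iSup₂ (f := fun (l : ℝ) (_ : 0 < l) =>
      ENNReal.ofReal l * (μ {x | l < |f x|}) ^ (1 / p)) l hl
  -- case M = 0 : f is a.e. zero
  by_cases hM0 : M = 0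
  · have hnull : ∀ l : ℝ, 0 < l → μ {x | l < |f x|} = 0 := by
      intro l hl
      have hle := hsup l hl
      rw [hM0, le_zero_iff, mul_eq_zero] at hle
      rcases hle with h | h
      · exact absurd h (by simp [ENNReal.ofReal_eq_zero, not_le, hl])
      · rcases (ENNReal.rpow_eq_zero_iff.mp h) with ⟨h1, _⟩ | ⟨_, h2⟩
        · exact h1
        · exact absurd h2 (by simp; positivity)
    have haezero : f =ᵐ[μ] 0 := by
      have hU : μ {x | f x ≠ 0} = 0 := by
        have hss : {x | f x ≠ 0} ⊆ ⋃ n : ℕ, {x | 1 / (n + 1 : ℝ) < |f x|} := by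
          intro x hx
          obtain ⟨n, hn⟩ := exists_nat_one_div_lt (abs_pos.mpr hx)
          exact Set.mem_iUnion.mpr ⟨n, hn⟩
        exact measure_mono_null hss
          (measure_iUnion_null fun n => hnull _ (by positivity))
      exact (ae_iff).mpr (by simpa using hU)
    have hf0 : eLpNorm f ⊤ μ = 0 := by
      rw [eLpNorm_congr_ae haezero]
      exact eLpNorm_zero
    have h0 : eLpNorm (T f) ⊤ μ = 0 :=
      le_antisymm (by simpa [hf0] using hTB f) zero_le
    rw [h0]; exact zero_le
  -- case M = ⊤
  have hCApos : 0 < (Kr + 1) * A ^ (1 / p) * B ^ (1 - 1 / p) := by positivity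
  by_cases hMtop : M = ⊤
  · rw [hMtop, ENNReal.mul_top (by simp [ENNReal.ofReal_eq_zero, not_le]; positivity)]
    exact le_top
  -- main case
  have hm : 0 < M.toReal := ENNReal.toReal_pos hM0 hMtop
  set m := M.toReal with hmdef
  have hMm : M = ENNReal.ofReal m := (ENNReal.ofReal_toReal hMtop).symm
  set lam := (A / B) ^ (1 / p) * m with hlamdef
  have hlam : 0 < lam := by positivity
  set g := ({x | lam < |f x|}).indicator f with hgdef
  set h := f - g with hhdef
  have hfgh : f = g + h := by
    funext x
    simp [hhdef]
  have hTf : T f = T g + T h := by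
    rw [show f = g + h from hfgh]
    exact hadd g h
  have step1 : eLpNorm (T f) ⊤ μ ≤ eLpNorm (T g) ⊤ μ + eLpNorm (T h) ⊤ μ := by
    rw [hTf]
    simp only [eLpNorm_exponent_top]
    exact eLpNormEssSup_add_le
  -- bound on h
  have hhb : eLpNorm h ⊤ μ ≤ ENNReal.ofReal lam := by
    rw [eLpNorm_exponent_top]
    apply eLpNormEssSup_le_of_ae_bound (C := lam)
    apply Filter.Eventually.of_forall
    intro x
    rw [Real.norm_eq_abs]
    by_cases hx : x ∈ {x | lam < |f x|}
    · have : g x = f x := Set.indicator_of_mem hx f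
      simp [hhdef, this, hlam.le]
    · have hgx : g x = 0 := Set.indicator_of_notMem hx f
      have : |f x| ≤ lam := le_of_not_gt hx
      simpa [hhdef, hgx] using this
  have hb : eLpNorm (T h) ⊤ μ ≤ ENNReal.ofReal B * ENNReal.ofReal lam :=
    (hTB h).trans (mul_le_mul_right hhb _)
  -- weak-type bound from the sup
  have hweak : ∀ l : ℝ, 0 < l →
      ENNReal.ofReal l * μ {x | l < |f x|} ≤ M ^ p * ENNReal.ofReal l ^ (1 - p) := by
    intro l hl
    have hL'0 : ENNReal.ofReal l ≠ 0 := by simp [ENNReal.ofReal_eq_zero, not_le, hl]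
    have hL'top : ENNReal.ofReal l ≠ ⊤ := ENNReal.ofReal_ne_top
    have h1 : (μ {x | l < |f x|}) ^ (1 / p) ≤ M / ENNReal.ofReal l :=
      (ENNReal.le_div_iff_mul_le (Or.inl hL'0) (Or.inl hL'top)).mpr
        (by rw [mul_comm]; exact hsup l hl)
    have h2 : μ {x | l < |f x|} ≤ (M / ENNReal.ofReal l) ^ p := by
      have h3 := ENNReal.rpow_le_rpow h1 hp0.le
      rwa [← ENNReal.rpow_mul, one_div, inv_mul_cancel₀ hp0', ENNReal.rpow_one] at h3
    calc ENNReal.ofReal l * μ {x | l < |f x|}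
        ≤ ENNReal.ofReal l * (M / ENNReal.ofReal l) ^ p := mul_le_mul_right h2 _
      _ = M ^ p * ENNReal.ofReal l ^ (1 - p) := by
          rw [ENNReal.div_rpow_of_nonneg _ _ hp0.le]
          have e1 : ENNReal.ofReal l ^ (1 - p)
              = ENNReal.ofReal l * (ENNReal.ofReal l ^ p)⁻¹ := by
            rw [show (1 - p) = 1 + (-p) by ring, ENNReal.rpow_add 1 (-p) hL'0 hL'top,
              ENNReal.rpow_one, ENNReal.rpow_neg]
          rw [e1, div_eq_mul_inv]
          ring
  -- bound on g
  have hga : eLpNorm (T g) ⊤ μ ≤ ENNReal.ofReal A *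
      (M ^ p * ENNReal.ofReal lam ^ (1 - p) * (1 + 2 * (1 - (2 : ℝ≥0∞) ^ (1 - p))⁻¹)) := by
    refine (hTA g).trans (mul_le_mul_right ?_ _)
    rw [eLpNorm_one_eq_lintegral_enorm]
    exact key_integral μ f p hp1 M lam hlam ptwise_aux hweak
  -- convert ENNReal constants to ofReal
  have e0 : (2 : ℝ≥0∞) ^ (1 - p) = ENNReal.ofReal ((2 : ℝ) ^ (1 - p)) := by
    rw [show (2 : ℝ≥0∞) = ENNReal.ofReal 2 by norm_num, ENNReal.ofReal_rpow_of_pos two_pos]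
  have hKfull : (1 + 2 * (1 - (2 : ℝ≥0∞) ^ (1 - p))⁻¹ : ℝ≥0∞) = ENNReal.ofReal Kr := by
    rw [hKr, ENNReal.ofReal_add zero_le_one (mul_nonneg (by norm_num) hinv.le),
      ENNReal.ofReal_mul (by norm_num), ENNReal.ofReal_inv_of_pos (by linarith),
      ENNReal.ofReal_sub _ hr2.le, ← e0]
    norm_num
  have hMp : M ^ p = ENNReal.ofReal (m ^ p) := by
    rw [hMm, ENNReal.ofReal_rpow_of_pos hm]
  have hLp : ENNReal.ofReal lam ^ (1 - p) = ENNReal.ofReal (lam ^ (1 - p)) :=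
    ENNReal.ofReal_rpow_of_pos hlam
  obtain ⟨hcore2, hcore1⟩ := real_core hp1 hA0 hB0 hm
  calc eLpNorm (T f) ⊤ μ
      ≤ eLpNorm (T g) ⊤ μ + eLpNorm (T h) ⊤ μ := step1
    _ ≤ ENNReal.ofReal A *
          (M ^ p * ENNReal.ofReal lam ^ (1 - p) * (1 + 2 * (1 - (2 : ℝ≥0∞) ^ (1 - p))⁻¹))
        + ENNReal.ofReal B * ENNReal.ofReal lam := add_le_add hga hb
    _ = ENNReal.ofReal (A * (m ^ p * lam ^ (1 - p) * Kr) + B * lam) := by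
        rw [hMp, hLp, hKfull, ← ENNReal.ofReal_mul (by positivity),
          ← ENNReal.ofReal_mul (by positivity), ← ENNReal.ofReal_mul hA,
          ← ENNReal.ofReal_mul hB, ← ENNReal.ofReal_add (by positivity) (by positivity)]
    _ ≤ ENNReal.ofReal ((Kr + 1) * A ^ (1 / p) * B ^ (1 - 1 / p)) * M := by
        rw [hMm, ← ENNReal.ofReal_mul (by positivity)]
        apply ENNReal.ofReal_le_ofReal
        apply le_of_eq
        calc A * (m ^ p * lam ^ (1 - p) * Kr) + B * lam
            = (A * (m ^ p * lam ^ (1 - p))) * Kr + B * lam := by ring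
          _ = (A ^ (1 / p) * B ^ (1 - 1 / p) * m) * Kr
              + A ^ (1 / p) * B ^ (1 - 1 / p) * m := by rw [hcore1, hcore2]
          _ = (Kr + 1) * A ^ (1 / p) * B ^ (1 - 1 / p) * m := by ring
end

section
/- Let E ⊂ (0,1) be a measurable set of positive Lebesgue measure, (s_j) a sequence of positive reals with s_j → ∞, D a real constant, and (c_j) a sequence of reals. Suppose the functions F_j(x) = c_j (cos(s_j x + D) + r_j(x)) satisfy sup_{x∈E} |F_j(x)| ≤ K for all j, where sup_{x∈E}|r_j(x)| ≤ C/j. Then the sequence (c_j) is bounded. -/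
open MeasureTheory Filter Topology

theorem stmt18 (E : Set ℝ) (hE : MeasurableSet E) (hE' : E ⊆ Set.Ioo 0 1)
    (hEpos : 0 < volume E) (s : ℕ → ℝ) (hs : ∀ j, 0 < s j)
    (hstend : Tendsto s atTop atTop) (D : ℝ) (c : ℕ → ℝ) (r : ℕ → ℝ → ℝ)
    (hrmeas : ∀ j, Measurable (r j)) (C K : ℝ)
    (hr : ∀ j : ℕ, 1 ≤ j → ∀ x ∈ E, |r j x| ≤ C / (j : ℝ))
    (hF : ∀ j : ℕ, ∀ x ∈ E, |c j * (Real.cos (s j * x + D) + r j x)| ≤ K) :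
    ∃ M : ℝ, ∀ j, |c j| ≤ M := by
  obtain ⟨x₀, hx₀⟩ := nonempty_of_measure_ne_zero hEpos.ne'
  have hK0 : 0 ≤ K := le_trans (abs_nonneg _) (hF 0 x₀ hx₀)
  have hfin : volume E < ⊤ := by
    refine lt_of_le_of_lt (measure_mono hE') ?_
    rw [Real.volume_Ioo]
    exact ENNReal.ofReal_lt_top
  obtain ⟨m, hm⟩ : ∃ m : ℝ, m = (volume E).toReal := ⟨_, rfl⟩
  have hm0 : 0 < m := hm ▸ ENNReal.toReal_pos hEpos.ne' hfin.ne
  haveI : IsFiniteMeasure (volume.restrict E) :=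
    ⟨by rwa [Measure.restrict_apply_univ]⟩
  -- integrability helper
  have intg : ∀ (g : ℝ → ℂ), Continuous g → (∀ x, ‖g x‖ ≤ 1) → IntegrableOn g E := by
    intro g hg hb
    exact Integrable.mono' (integrable_const 1) hg.aestronglyMeasurable
      (Filter.Eventually.of_forall hb)
  have intgR : ∀ (g : ℝ → ℝ) (B : ℝ), Continuous g → (∀ x, |g x| ≤ B) → IntegrableOn g E := by
    intro g B hg hb
    exact Integrable.mono' (integrable_const B) hg.aestronglyMeasurable
      (Filter.Eventually.of_forall hb)
  set f : ℝ → ℂ := E.indicator (fun _ => 1) with hf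
  have hFt : Tendsto (fun j => FourierTransform.fourier f (-(s j) / Real.pi)) atTop (𝓝 0) := by
    apply (Real.zero_at_infty_fourier f).comp
    rw [cocompact_eq_atBot_atTop]
    refine Tendsto.mono_right ?_ le_sup_left
    apply Tendsto.atBot_div_const Real.pi_pos
    exact tendsto_neg_atBot_iff.mpr hstend
  have hFval : ∀ j, FourierTransform.fourier f (-(s j) / Real.pi)
      = ∫ x in E, Complex.exp ((2 * s j * x : ℝ) * Complex.I) := by
    intro j
    rw [Real.fourier_real_eq_integral_exp_smul, ← integral_indicator hE]
    congr 1
    ext v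
    by_cases hv : v ∈ E
    · have harg : -2 * Real.pi * v * (-(s j) / Real.pi) = 2 * s j * v := by
        field_simp
      simp only [hf, Set.indicator_of_mem hv, smul_eq_mul, mul_one, harg]
    · simp [hf, Set.indicator_of_notMem hv]
  -- Riemann-Lebesgue conclusion for cos(2(s j x + D))
  have T1 : Tendsto (fun j => ∫ x in E, Real.cos (2 * (s j * x + D))) atTop (𝓝 0) := by
    have h0 : Tendsto (fun j => (Complex.exp ((2 * D : ℝ) * Complex.I)
        * FourierTransform.fourier f (-(s j) / Real.pi)).re) atTop (𝓝 0) := by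
      have := (hFt.const_mul (Complex.exp ((2 * D : ℝ) * Complex.I)))
      rw [mul_zero] at this
      simpa only [Function.comp_def, Complex.zero_re] using (Complex.continuous_re.tendsto 0).comp this
    convert h0 using 2 with j
    rw [hFval j, ← integral_const_mul]
    have he : ∀ x : ℝ, Complex.exp ((2 * D : ℝ) * Complex.I)
        * Complex.exp ((2 * s j * x : ℝ) * Complex.I)
        = Complex.exp ((2 * (s j * x + D) : ℝ) * Complex.I) := by
      intro x
      rw [← Complex.exp_add]
      congr 1
      push_cast
      ring
    simp_rw [he]
    have hint : IntegrableOn (fun x => Complex.exp ((2 * (s j * x + D) : ℝ) * Complex.I)) E := by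
      apply intg
      · exact Complex.continuous_exp.comp
          ((Complex.continuous_ofReal.comp (by fun_prop)).mul continuous_const)
      · intro x
        rw [Complex.norm_exp_ofReal_mul_I]
    rw [← RCLike.re_eq_complex_re, ← integral_re hint]
    simp_rw [RCLike.re_eq_complex_re, Complex.exp_ofReal_mul_I_re]
  -- the cos² integral tends to m/2
  have hcos2int : ∀ j, IntegrableOn (fun x => Real.cos (2 * (s j * x + D))) E :=
    fun j => intgR _ 1 (by fun_prop) (fun x => Real.abs_cos_le_one _)
  have hval : ∀ j, (∫ x in E, Real.cos (s j * x + D) ^ 2)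
      = m / 2 + (∫ x in E, Real.cos (2 * (s j * x + D))) / 2 := by
    intro j
    have : (fun x => Real.cos (s j * x + D) ^ 2)
        = fun x => 1 / 2 + Real.cos (2 * (s j * x + D)) / 2 := by
      funext x; rw [Real.cos_sq]
    rw [this, integral_add (integrable_const _) ((hcos2int j).div_const 2),
      setIntegral_const, integral_div, smul_eq_mul, measureReal_def, ← hm]
    ring
  have T2 : Tendsto (fun j => ∫ x in E, Real.cos (s j * x + D) ^ 2) atTop (𝓝 (m / 2)) := by
    simp_rw [hval]
    have := tendsto_const_nhds (x := m / 2) (f := atTop (α := ℕ)) |>.add (T1.div_const 2)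
    simpa using this
  have hev : ∀ᶠ j in atTop, m / 4 ≤ ∫ x in E, Real.cos (s j * x + D) ^ 2 :=
    T2.eventually (eventually_ge_nhds (by linarith))
  obtain ⟨N, hN⟩ := eventually_atTop.mp hev
  set N₀ : ℕ := max N (max 1 ⌈4 * C⌉₊) with hN₀
  -- key bound for large j
  have key : ∀ j, N₀ ≤ j → |c j| ≤ 4 * K := by
    intro j hj
    have hj1 : 1 ≤ j := le_trans (le_trans (le_max_left _ _) (le_max_right _ _)) hj
    have hjN : N ≤ j := le_trans (le_max_left _ _) hj
    have hjpos : (0 : ℝ) < j := by exact_mod_cast hj1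
    have hCj : C / j ≤ 1 / 4 := by
      rw [div_le_iff₀ hjpos]
      have h1 : (4 * C : ℝ) ≤ (⌈4 * C⌉₊ : ℝ) := Nat.le_ceil _
      have h2 : ((⌈4 * C⌉₊ : ℕ) : ℝ) ≤ (j : ℝ) := by
        exact_mod_cast le_trans (le_trans (le_max_right _ _) (le_max_right _ _)) hj
      linarith
    obtain ⟨B, hB⟩ : ∃ B : ℝ, B = K + |c j| * (C / (j:ℝ)) := ⟨_, rfl⟩
    have hpt : ∀ x ∈ E, |c j * Real.cos (s j * x + D)| ≤ B := by
      intro x hx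
      rw [hB]
      have e1 : c j * Real.cos (s j * x + D)
          = c j * (Real.cos (s j * x + D) + r j x) + (- (c j * r j x)) := by ring
      rw [e1]
      refine le_trans (abs_add_le _ _) ?_
      refine add_le_add (hF j x hx) ?_
      rw [abs_neg, abs_mul]
      exact mul_le_mul_of_nonneg_left (hr j hj1 x hx) (abs_nonneg _)
    have hB0 : 0 ≤ B := le_trans (abs_nonneg _) (hpt x₀ hx₀)
    have hsq : ∀ x ∈ E, (c j) ^ 2 * Real.cos (s j * x + D) ^ 2 ≤ B ^ 2 := by
      intro x hx
      have hy := hpt x hx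
      have h1 : (c j * Real.cos (s j * x + D)) ^ 2 ≤ B ^ 2 := by
        nlinarith [abs_nonneg (c j * Real.cos (s j * x + D)),
          sq_abs (c j * Real.cos (s j * x + D))]
      calc (c j) ^ 2 * Real.cos (s j * x + D) ^ 2
          = (c j * Real.cos (s j * x + D)) ^ 2 := by ring
        _ ≤ B ^ 2 := h1
    have hintL : IntegrableOn (fun x => (c j) ^ 2 * Real.cos (s j * x + D) ^ 2) E := by
      apply intgR _ ((c j) ^ 2) (by fun_prop)
      intro x
      rw [abs_of_nonneg (by positivity)]
      have h1 : Real.cos (s j * x + D) ^ 2 ≤ 1 := Real.cos_sq_le_one _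
      nlinarith [sq_nonneg (c j)]
    have hmono : (c j) ^ 2 * ∫ x in E, Real.cos (s j * x + D) ^ 2 ≤ B ^ 2 * m := by
      rw [← integral_const_mul]
      have h2 := setIntegral_mono_on hintL (integrableOn_const hfin.ne) hE
        (fun x hx => hsq x hx)
      rw [setIntegral_const, smul_eq_mul, measureReal_def, ← hm] at h2
      linarith
    have h4 : (c j) ^ 2 * (m / 4) ≤ B ^ 2 * m :=
      le_trans (mul_le_mul_of_nonneg_left (hN j hjN) (sq_nonneg _)) hmono
    have hc2 : (c j) ^ 2 ≤ 4 * B ^ 2 := le_of_mul_le_mul_right (by nlinarith [h4]) hm0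
    have h5 : |c j| ≤ 2 * B := by
      nlinarith [hc2, hB0, sq_abs (c j), abs_nonneg (c j)]
    have h7 : |c j| * (C / j) ≤ |c j| * (1 / 4) := mul_le_mul_of_nonneg_left hCj (abs_nonneg _)
    rw [hB] at h5
    linarith
  refine ⟨4 * K + ∑ i ∈ Finset.range N₀, |c i|, fun j => ?_⟩
  by_cases hj : N₀ ≤ j
  · have := key j hj
    have : (0:ℝ) ≤ ∑ i ∈ Finset.range N₀, |c i| :=
      Finset.sum_nonneg fun i _ => abs_nonneg _
    linarith [key j hj]
  · push_neg at hj
    have h1 : |c j| ≤ ∑ i ∈ Finset.range N₀, |c i| :=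
      Finset.single_le_sum (fun i _ => abs_nonneg (c i)) (Finset.mem_range.mpr hj)
    nlinarith
end
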